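/- arXiv:2411.00013 — 4 statements merged into one kernel-verified Lean document; each statement's English description precedes it below -/
import Mathlib

section
/- For all integers n ≥ 1, the overcubic partition triples function satisfies bt(n) ≡ 0 (mod 2). -/
open PowerSeries

/-- Truncated version of `fₖ = ∏_{i≥1} (1 - q^{k i})`: the product over `1 ≤ i ≤ N`,
which has the same coefficients as the infinite product in degrees `≤ N`. -/
noncomputable def fTrunc (k N : ℕ) : PowerSeries ℤ :=
  ∏ i ∈ Finset.Icc 1 N, (1 - (PowerSeries.X : PowerSeries ℤ) ^ (k * i))

/-- `bt n` is the `n`-th coefficient of `f₄³ / (f₁⁶ f₂³)`, the number of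
overcubic partition triples of `n`. -/
noncomputable def bt (n : ℕ) : ℤ :=
  PowerSeries.coeff n
    ((fTrunc 4 n) ^ 3 * PowerSeries.invOfUnit ((fTrunc 1 n) ^ 6 * (fTrunc 2 n) ^ 3) 1)

noncomputable abbrev φ2 : ℤ →+* ZMod 2 := Int.castRingHom (ZMod 2)

lemma constCoeff_fTrunc (k N : ℕ) (hk : k ≠ 0) :
    PowerSeries.constantCoeff (fTrunc k N) = 1 := by
  rw [fTrunc, map_prod]
  apply Finset.prod_eq_one
  intro i hi
  have hi1 : 1 ≤ i := (Finset.mem_Icc.mp hi).1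
  have : k * i ≠ 0 := by positivity
  simp [this]

lemma map_sq (k N : ℕ) :
    (PowerSeries.map φ2 (fTrunc k N)) ^ 2 = PowerSeries.map φ2 (fTrunc (2 * k) N) := by
  simp only [fTrunc, map_prod, map_sub, map_one, map_pow, PowerSeries.map_X]
  rw [← Finset.prod_pow]
  apply Finset.prod_congr rfl
  intro i _
  haveI : CharP (PowerSeries (ZMod 2)) 2 :=
    charP_of_injective_ringHom (PowerSeries.C_injective (R := ZMod 2)) 2
  rw [CharTwo.sub_eq_add, CharTwo.sub_eq_add, CharTwo.add_sq, one_pow,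
    ← pow_mul]
  ring_nf

theorem stmt0 (n : ℕ) (hn : 1 ≤ n) : bt n ≡ 0 [ZMOD 2] := by
  have key : (PowerSeries.coeff n) (PowerSeries.map φ2
      ((fTrunc 4 n) ^ 3 * PowerSeries.invOfUnit ((fTrunc 1 n) ^ 6 * (fTrunc 2 n) ^ 3) 1)) = 0 := by
    have hD : PowerSeries.map φ2 ((fTrunc 1 n) ^ 6 * (fTrunc 2 n) ^ 3)
        = PowerSeries.map φ2 ((fTrunc 4 n) ^ 3) := by
      have h1 := map_sq 1 n
      have h2 := map_sq 2 n
      simp only [map_mul, map_pow]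
      calc (PowerSeries.map φ2 (fTrunc 1 n)) ^ 6 * (PowerSeries.map φ2 (fTrunc 2 n)) ^ 3
          = ((PowerSeries.map φ2 (fTrunc 1 n)) ^ 2) ^ 3 * (PowerSeries.map φ2 (fTrunc 2 n)) ^ 3 := by ring
        _ = ((PowerSeries.map φ2 (fTrunc 2 n)) ^ 2) ^ 3 := by rw [h1]; ring
        _ = (PowerSeries.map φ2 (fTrunc 4 n)) ^ 3 := by rw [h2]
    have hu : PowerSeries.constantCoeff ((fTrunc 1 n) ^ 6 * (fTrunc 2 n) ^ 3) = 1 := by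
      simp [constCoeff_fTrunc 1 n one_ne_zero, constCoeff_fTrunc 2 n two_ne_zero]
    have hinv : ((fTrunc 1 n) ^ 6 * (fTrunc 2 n) ^ 3) *
        PowerSeries.invOfUnit ((fTrunc 1 n) ^ 6 * (fTrunc 2 n) ^ 3) 1 = 1 :=
      PowerSeries.mul_invOfUnit _ 1 (by simpa using hu)
    rw [map_mul]
    rw [← hD]
    rw [← map_mul, hinv]
    simp [PowerSeries.coeff_one, Nat.one_le_iff_ne_zero.mp hn]
  have h0 : φ2 (bt n) = 0 := by
    unfold bt
    rw [← PowerSeries.coeff_map]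
    exact key
  have hdvd : (2 : ℤ) ∣ bt n := by
    have : ((bt n : ℤ) : ZMod 2) = 0 := by simpa using h0
    exact_mod_cast (ZMod.intCast_zmod_eq_zero_iff_dvd _ 2).mp this
  exact (Int.modEq_zero_iff_dvd).mpr hdvd
end

section
/- For all integers n ≥ 0 and α ≥ 0, bt(2^α (4n+3)) ≡ 0 (mod 4). -/
open PowerSeries

open Finset

/-! ### Agreement of power series coefficients up to a degree -/

/-- Two power series agree in all coefficients up to degree `N`. -/
def EqUpTo {R : Type*} [CommRing R] (N : ℕ) (A B : PowerSeries R) : Prop :=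
  ∀ m ≤ N, PowerSeries.coeff m A = PowerSeries.coeff m B

namespace EqUpTo

variable {R : Type*} [CommRing R] {N : ℕ}

lemma refl (A : PowerSeries R) : EqUpTo N A A := fun _ _ => rfl

lemma trans {A B C : PowerSeries R} (h1 : EqUpTo N A B) (h2 : EqUpTo N B C) :
    EqUpTo N A C := fun m hm => (h1 m hm).trans (h2 m hm)

lemma add {A B C D : PowerSeries R} (h1 : EqUpTo N A B) (h2 : EqUpTo N C D) :
    EqUpTo N (A + C) (B + D) := fun m hm => by
  rw [map_add, map_add, h1 m hm, h2 m hm]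

lemma mul_left {A B : PowerSeries R} (C : PowerSeries R) (h : EqUpTo N A B) :
    EqUpTo N (C * A) (C * B) := by
  intro m hm
  rw [PowerSeries.coeff_mul, PowerSeries.coeff_mul]
  refine Finset.sum_congr rfl fun p hp => ?_
  rw [Finset.HasAntidiagonal.mem_antidiagonal] at hp
  rw [h p.2 (le_trans (by omega) hm)]

lemma mul {A B C D : PowerSeries R} (h1 : EqUpTo N A B) (h2 : EqUpTo N C D) :
    EqUpTo N (A * C) (B * D) := by
  have h3 : EqUpTo N (A * C) (A * D) := h2.mul_left A
  have h4 : EqUpTo N (A * D) (B * D) := by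
    have := h1.mul_left D
    intro m hm; rw [mul_comm A D, mul_comm B D]; exact this m hm
  exact h3.trans h4

lemma mul_comm_right {A B : PowerSeries R} (h : EqUpTo N A B) (C : PowerSeries R) :
    EqUpTo N (A * C) (C * B) := by
  intro m hm
  rw [mul_comm A C]
  exact (h.mul_left C) m hm

lemma pow {A B : PowerSeries R} (h : EqUpTo N A B) (k : ℕ) :
    EqUpTo N (A ^ k) (B ^ k) := by
  induction k with
  | zero => simpa using EqUpTo.refl 1
  | succ k ih => rw [pow_succ, pow_succ]; exact ih.mul h

end EqUpTo

/-! ### The geometric series over `ZMod 2` and divisor counting -/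

/-- Geometric series `∑_{t ≥ 0} X^{s t}` over `ZMod 2`. -/
noncomputable def invGeom (s : ℕ) : PowerSeries (ZMod 2) :=
  PowerSeries.mk fun m => if s ∣ m then 1 else 0

lemma one_add_X_pow_mul_invGeom {s : ℕ} (hs : 0 < s) :
    ((1 + X ^ s) * invGeom s : PowerSeries (ZMod 2)) = 1 := by
  ext m
  rw [add_mul, one_mul, map_add, coeff_X_pow_mul']
  rcases Nat.eq_zero_or_pos m with rfl | hm
  · simp [invGeom, coeff_zero_eq_constantCoeff, hs.ne']
  · rw [PowerSeries.coeff_one, if_neg hm.ne']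
    by_cases hd : s ∣ m
    · have hsm : s ≤ m := Nat.le_of_dvd hm hd
      rw [if_pos hsm]
      have hd2 : s ∣ m - s := (Nat.dvd_sub hd dvd_rfl)
      simp only [invGeom, coeff_mk, if_pos hd, if_pos hd2]
      decide
    · have : ¬ (s ≤ m ∧ s ∣ m - s) := by
        rintro ⟨h1, h2⟩
        exact hd (by have := Nat.dvd_add h2 (dvd_refl s); rwa [Nat.sub_add_cancel h1] at this)
      by_cases hsm : s ≤ m
      · have hd2 : ¬ s ∣ m - s := fun h => this ⟨hsm, h⟩
        simp [invGeom, hd, hd2, hsm]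
      · simp [invGeom, hd, hsm]

lemma coeff_X_pow_mul_invGeom (s m : ℕ) (hs : 0 < s) :
    PowerSeries.coeff m (X ^ s * invGeom s) = if s ∣ m ∧ 0 < m then 1 else 0 := by
  rw [coeff_X_pow_mul']
  by_cases hsm : s ≤ m
  · rw [if_pos hsm]
    have : (s ∣ m - s) ↔ (s ∣ m) := by
      constructor
      · intro h; have := Nat.dvd_add h (dvd_refl s); rwa [Nat.sub_add_cancel hsm] at this
      · intro h; exact Nat.dvd_sub h dvd_rfl
    simp only [invGeom, coeff_mk, this]
    rcases em (s ∣ m) with h | h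
    · rw [if_pos h, if_pos ⟨h, lt_of_lt_of_le hs hsm⟩]
    · rw [if_neg h, if_neg (by tauto)]
  · rw [if_neg hsm]
    have : ¬ (s ∣ m ∧ 0 < m) := by
      rintro ⟨h1, h2⟩; exact hsm (Nat.le_of_dvd h2 h1)
    rw [if_neg this]

lemma card_divisors_zmod2 (m : ℕ) (hm : 0 < m) :
    ((m.divisors.card : ZMod 2)) = if IsSquare m then 1 else 0 := by
  have hsum : ((m.divisors.card : ZMod 2)) = ∑ _d ∈ m.divisors, (1 : ZMod 2) := by
    simp
  by_cases hsq : IsSquare m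
  · obtain ⟨r, hr⟩ := hsq
    have hrdvd : r ∣ m := ⟨r, hr⟩
    have hrmem : r ∈ m.divisors := Nat.mem_divisors.mpr ⟨hrdvd, hm.ne'⟩
    rw [if_pos ⟨r, hr⟩, hsum, ← Finset.insert_erase hrmem,
      Finset.sum_insert (Finset.notMem_erase _ _)]
    have herase : ∑ _d ∈ m.divisors.erase r, (1 : ZMod 2) = 0 := by
      apply Finset.sum_involution (g := fun a _ => m / a)
      · intro a _; decide
      · intro a ha h
        have haer := Finset.mem_of_mem_erase ha
        have hadvd : a ∣ m := (Nat.mem_divisors.mp haer).1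
        intro heq
        have hsq' : a * a = m := by
          conv_rhs => rw [← Nat.div_mul_cancel hadvd]
          rw [heq]
        have : a = r := by
          have h2 := hsq'.trans hr
          nlinarith
        exact (Finset.ne_of_mem_erase ha) this
      · intro a ha
        have haer := Finset.mem_of_mem_erase ha
        have hadvd : a ∣ m := (Nat.mem_divisors.mp haer).1
        refine Finset.mem_erase.mpr ⟨?_, Nat.mem_divisors.mpr ⟨Nat.div_dvd_of_dvd hadvd, hm.ne'⟩⟩
        intro heq
        have : a = r := by
          have := Nat.div_div_self hadvd hm.ne'
          rw [heq] at this
          rw [← this, hr, Nat.mul_div_cancel_left r (by nlinarith : 0 < r)]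
        exact (Finset.ne_of_mem_erase ha) this
      · intro a ha
        exact Nat.div_div_self (Nat.mem_divisors.mp (Finset.mem_of_mem_erase ha)).1 hm.ne'
    rw [herase, add_zero]
  · rw [if_neg hsq, hsum]
    apply Finset.sum_involution (g := fun a _ => m / a)
    · intro a _; decide
    · intro a ha h heq
      have hadvd : a ∣ m := (Nat.mem_divisors.mp ha).1
      refine hsq ⟨a, ?_⟩
      conv_lhs => rw [← Nat.div_mul_cancel hadvd, heq]
    · intro a ha
      exact Nat.mem_divisors.mpr ⟨Nat.div_dvd_of_dvd (Nat.mem_divisors.mp ha).1, hm.ne'⟩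
    · intro a ha
      exact Nat.div_div_self (Nat.mem_divisors.mp ha).1 hm.ne'

lemma coeff_divsum (d N m : ℕ) (hd : 0 < d) (hm : m ≤ N) :
    PowerSeries.coeff m (∑ j ∈ Icc 1 N, X ^ (d * j) * invGeom (d * j)) =
    PowerSeries.coeff m (∑ k ∈ Icc 1 N, (X : PowerSeries (ZMod 2)) ^ (d * k ^ 2)) := by
  rw [map_sum, map_sum]
  have hL : ∀ j ∈ Icc 1 N, PowerSeries.coeff m (X ^ (d * j) * invGeom (d * j)) =
      if d * j ∣ m ∧ 0 < m then 1 else 0 := by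
    intro j hj
    rw [mem_Icc] at hj
    exact coeff_X_pow_mul_invGeom _ _ (Nat.mul_pos hd (by omega))
  rw [Finset.sum_congr rfl hL, Finset.sum_congr rfl
    (fun k _ => PowerSeries.coeff_X_pow (R := ZMod 2) m (d * k ^ 2)),
    Finset.sum_boole, Finset.sum_boole]
  rcases Nat.eq_zero_or_pos m with rfl | hm0
  · rw [Finset.filter_false_of_mem (fun j _ => by simp),
      Finset.filter_false_of_mem (fun k hk => by
        rw [mem_Icc] at hk
        have : 0 < d * k ^ 2 := Nat.mul_pos hd (pow_pos (by omega) 2)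
        omega)]
  · by_cases hdm : d ∣ m
    · obtain ⟨m', rfl⟩ := hdm
      have hm' : 0 < m' := Nat.pos_of_ne_zero (fun h => by simp [h] at hm0)
      have hm'N : m' ≤ N := le_trans (Nat.le_mul_of_pos_left m' hd) hm
      have h1 : Finset.filter (fun j => d * j ∣ d * m' ∧ 0 < d * m') (Icc 1 N) = m'.divisors := by
        ext j
        simp only [Finset.mem_filter, mem_Icc, Nat.mem_divisors]
        constructor
        · rintro ⟨⟨hj1, hj2⟩, hdvd, -⟩
          exact ⟨(mul_dvd_mul_iff_left hd.ne').mp hdvd, hm'.ne'⟩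
        · rintro ⟨hdvd, -⟩
          have hjpos : 0 < j := Nat.pos_of_dvd_of_pos hdvd hm'
          exact ⟨⟨hjpos, le_trans (Nat.le_of_dvd hm' hdvd) hm'N⟩,
            mul_dvd_mul_left d hdvd, Nat.mul_pos hd hm'⟩
      rw [h1, card_divisors_zmod2 m' hm']
      by_cases hsq : IsSquare m'
      · obtain ⟨r, hr⟩ := hsq
        have hrpos : 0 < r := by nlinarith
        have h2 : Finset.filter (fun k => d * m' = d * k ^ 2) (Icc 1 N) = {r} := by
          ext k
          simp only [Finset.mem_filter, mem_Icc, Finset.mem_singleton]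
          constructor
          · rintro ⟨⟨hk1, hk2⟩, heq⟩
            have : m' = k ^ 2 := Nat.eq_of_mul_eq_mul_left hd heq
            nlinarith [this.symm.trans hr]
          · rintro rfl
            have h3 : k ≤ m' := by nlinarith
            exact ⟨⟨hrpos, le_trans h3 hm'N⟩, by rw [hr]; ring⟩
        rw [h2, if_pos ⟨r, hr⟩]
        simp
      · rw [if_neg hsq, Finset.filter_false_of_mem, Finset.card_empty]
        · simp
        · intro k hk heq
          exact hsq ⟨k, by nlinarith [Nat.eq_of_mul_eq_mul_left hd heq]⟩
    · rw [Finset.filter_false_of_mem (fun j hj => by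
          rintro ⟨hdvd, -⟩
          exact hdm (dvd_trans (Dvd.intro j rfl) hdvd)),
        Finset.filter_false_of_mem (fun k hk heq => hdm ⟨k ^ 2, heq⟩)]

/-! ### Char-2 identities -/

lemma two_eq_zero2 : (2 : PowerSeries (ZMod 2)) = 0 := by
  have h : (2 : PowerSeries (ZMod 2)) = PowerSeries.C 2 := (map_ofNat (C (R := ZMod 2)) 2).symm
  rw [h, show (2 : ZMod 2) = 0 from rfl, map_zero]

lemma sub_eq_add2 (x y : PowerSeries (ZMod 2)) : x - y = x + y := by
  linear_combination (-y) * two_eq_zero2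

lemma term_eq {s : ℕ} (hs : 0 < s) :
    (X ^ s * invGeom s) * (1 + X ^ (2 * s)) = X ^ (2 * s) + X ^ s := by
  have hsq : (1 + X ^ (2 * s) : PowerSeries (ZMod 2)) = (1 + X ^ s) * (1 + X ^ s) := by
    have hx : (X ^ (2 * s) : PowerSeries (ZMod 2)) = X ^ s * X ^ s := by
      rw [two_mul, pow_add]
    rw [hx]
    linear_combination (-(X : PowerSeries (ZMod 2)) ^ s) * two_eq_zero2
  rw [hsq]
  calc X ^ s * invGeom s * ((1 + X ^ s) * (1 + X ^ s))
      = ((1 + X ^ s) * invGeom s) * (X ^ s * (1 + X ^ s)) := by ring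
    _ = X ^ (2 * s) + X ^ s := by
        rw [one_add_X_pow_mul_invGeom hs, one_mul, mul_add, mul_one, two_mul, pow_add, add_comm]

lemma sum_term_eq (d N : ℕ) (hd : 0 < d) :
    ∑ j ∈ Icc 1 N, (X ^ (2 * (d * j)) + X ^ (d * j)) *
        ∏ i ∈ (Icc 1 N).erase j, (1 + X ^ (2 * (d * i))) =
    (∑ j ∈ Icc 1 N, X ^ (d * j) * invGeom (d * j)) *
        ∏ i ∈ Icc 1 N, ((1 : PowerSeries (ZMod 2)) + X ^ (2 * (d * i))) := by
  rw [Finset.sum_mul]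
  refine Finset.sum_congr rfl fun j hj => ?_
  have hprod : ∏ i ∈ Icc 1 N, ((1 : PowerSeries (ZMod 2)) + X ^ (2 * (d * i))) =
      (1 + X ^ (2 * (d * j))) * ∏ i ∈ (Icc 1 N).erase j, (1 + X ^ (2 * (d * i))) :=
    (Finset.mul_prod_erase _ _ hj).symm
  rw [hprod, ← mul_assoc (X ^ (d * j) * invGeom (d * j)),
    term_eq (Nat.mul_pos hd (by rw [mem_Icc] at hj; omega))]

/-! ### Mod 4 tools -/

lemma prod_add_two {R : Type*} [CommRing R] (h : (2 : R) * 2 = 0) {ι : Type*} [DecidableEq ι]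
    (s : Finset ι) (a b : ι → R) :
    ∏ i ∈ s, (a i + 2 * b i) =
      ∏ i ∈ s, a i + 2 * ∑ j ∈ s, b j * ∏ i ∈ s.erase j, a i := by
  induction s using Finset.cons_induction with
  | empty => simp
  | cons c s hc ih =>
    rw [Finset.prod_cons, ih, Finset.prod_cons, Finset.sum_cons, Finset.erase_cons]
    have h2 : ∀ j ∈ s, b j * ∏ i ∈ (Finset.cons c s hc).erase j, a i =
        a c * (b j * ∏ i ∈ s.erase j, a i) := by
      intro j hj
      have hne : c ≠ j := fun h' => hc (h' ▸ hj)
      rw [Finset.erase_cons_of_ne hc hne, Finset.prod_cons]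
      ring
    rw [Finset.sum_congr rfl h2, ← Finset.mul_sum]
    linear_combination (b c * ∑ j ∈ s, b j * ∏ i ∈ s.erase j, a i) * h

lemma two_mul_eq_of_cast (s t : ZMod 4)
    (h : ZMod.castHom (show 2 ∣ 4 by norm_num) (ZMod 2) s =
      ZMod.castHom (show 2 ∣ 4 by norm_num) (ZMod 2) t) :
    2 * s = 2 * t := by revert s t; decide

lemma two_two_zero4 : (2 : PowerSeries (ZMod 4)) * 2 = 0 := by
  have h : (2 : PowerSeries (ZMod 4)) * 2 = 4 := by norm_num
  rw [h, show (4 : PowerSeries (ZMod 4)) = PowerSeries.C 4 from (map_ofNat _ 4).symm,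
    show (4 : ZMod 4) = 0 from rfl, map_zero]

lemma coeff_two_mul4 (m : ℕ) (A : PowerSeries (ZMod 4)) :
    PowerSeries.coeff m (2 * A) = 2 * PowerSeries.coeff m A := by
  have h : (2 : PowerSeries (ZMod 4)) * A = A + A := by ring
  rw [h, map_add, two_mul]

lemma EqUpTo_two_mul {N : ℕ} {A B : PowerSeries (ZMod 4)}
    (h : EqUpTo N (PowerSeries.map (ZMod.castHom (show 2 ∣ 4 by norm_num) (ZMod 2)) A)
      (PowerSeries.map (ZMod.castHom (show 2 ∣ 4 by norm_num) (ZMod 2)) B)) :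
    EqUpTo N (2 * A) (2 * B) := by
  intro m hm
  have h' := h m hm
  rw [PowerSeries.coeff_map, PowerSeries.coeff_map] at h'
  rw [coeff_two_mul4, coeff_two_mul4]
  exact two_mul_eq_of_cast _ _ h'

/-! ### The main congruence `F_d² ≡ F_{2d} (1 + 2 ∑ Xᵈᵏ²)  (mod 4)` -/

noncomputable def FF (k M : ℕ) : PowerSeries (ZMod 4) :=
  ∏ i ∈ Finset.Icc 1 M, (1 - X ^ (k * i))

noncomputable def UU (d M : ℕ) : PowerSeries (ZMod 4) :=
  ∑ k ∈ Finset.Icc 1 M, X ^ (d * k ^ 2)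

lemma key (d M : ℕ) (hd : 0 < d) :
    EqUpTo M (FF d M ^ 2) (FF (2 * d) M * (1 + 2 * UU d M)) := by
  have hexp : FF d M ^ 2 = ∏ i ∈ Finset.Icc 1 M,
      ((1 - X ^ (2 * d * i)) + 2 * (X ^ (2 * (d * i)) - X ^ (d * i))) := by
    rw [FF, ← Finset.prod_pow]
    refine Finset.prod_congr rfl fun i _ => ?_
    have hx : (X : PowerSeries (ZMod 4)) ^ (2 * d * i) = (X ^ (d * i)) ^ 2 := by
      rw [← pow_mul]; congr 1; ring
    have hx2 : (X : PowerSeries (ZMod 4)) ^ (2 * (d * i)) = (X ^ (d * i)) ^ 2 := by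
      rw [← pow_mul]; congr 1; ring
    rw [hx, hx2]; ring
  rw [hexp, prod_add_two two_two_zero4]
  have hrhs : FF (2 * d) M * (1 + 2 * UU d M) =
      FF (2 * d) M + 2 * (FF (2 * d) M * UU d M) := by ring
  rw [hrhs]
  refine EqUpTo.add (EqUpTo.refl _) ?_
  apply EqUpTo_two_mul
  simp only [FF, UU, map_sum, map_mul, map_sub, map_prod, map_pow, PowerSeries.map_X, map_one]
  simp only [sub_eq_add2]
  simp only [mul_assoc]
  rw [sum_term_eq d M hd]
  exact EqUpTo.mul_comm_right (fun m hm => coeff_divsum d M m hd hm) _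

/-! ### Arithmetic facts -/

lemma not_sq (n : ℕ) : ∀ α k : ℕ, k ^ 2 ≠ 2 ^ α * (4 * n + 3) := by
  intro α
  induction α using Nat.strong_induction_on with
  | _ α IH =>
    intro k hk
    match α with
    | 0 =>
      rw [pow_zero, one_mul] at hk
      rcases Nat.even_or_odd k with ⟨t, rfl⟩ | ⟨t, rfl⟩
      · have h : (t + t) ^ 2 = 4 * (t * t) := by ring
        omega
      · have h : (2 * t + 1) ^ 2 = 4 * (t * t + t) + 1 := by ring
        omega
    | β + 1 =>
      have h2 : 2 ∣ k := by
        refine Nat.Prime.dvd_of_dvd_pow Nat.prime_two (n := 2) ?_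
        rw [hk, pow_succ]
        exact ⟨2 ^ β * (4 * n + 3), by ring⟩
      obtain ⟨t, rfl⟩ := h2
      match β with
      | 0 =>
        have h3 : (2 * t) ^ 2 = 4 * (t * t) := by ring
        rw [h3, pow_one] at hk
        omega
      | γ + 1 =>
        apply IH γ (by omega) t
        have h3 : (2 * t) ^ 2 = 4 * t ^ 2 := by ring
        have h4 : 2 ^ (γ + 1 + 1) * (4 * n + 3) = 4 * (2 ^ γ * (4 * n + 3)) := by
          rw [pow_succ, pow_succ]; ring
        rw [h3, h4] at hk
        omega

lemma not_two_sq (n : ℕ) : ∀ α k : ℕ, 2 * k ^ 2 ≠ 2 ^ α * (4 * n + 3) := by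
  intro α k h
  match α with
  | 0 => rw [pow_zero, one_mul] at h; omega
  | β + 1 =>
    rw [pow_succ 2 β] at h
    exact not_sq n β k (by linarith)

/-! ### Main theorem -/

theorem stmt12 (n α : ℕ) : bt (2 ^ α * (4 * n + 3)) ≡ 0 [ZMOD 4] := by
  set M := 2 ^ α * (4 * n + 3) with hMdef
  have hMpos : 0 < M := Nat.mul_pos (pow_pos (by norm_num) α) (by omega)
  -- the integral series and its inverse
  set G : PowerSeries ℤ := fTrunc 1 M ^ 6 * fTrunc 2 M ^ 3 with hGdef
  have hconstF : ∀ k : ℕ, 0 < k → constantCoeff (fTrunc k M) = 1 := by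
    intro k hk
    rw [fTrunc, map_prod]
    refine Finset.prod_eq_one fun i hi => ?_
    rw [mem_Icc] at hi
    rw [map_sub, map_one, map_pow, constantCoeff_X, zero_pow (Nat.mul_pos hk (show 0 < i by omega)).ne', sub_zero]
  have hGconst : constantCoeff G = 1 := by
    rw [hGdef, map_mul, map_pow, map_pow, hconstF 1 one_pos, hconstF 2 two_pos]
    norm_num
  have hGI : G * PowerSeries.invOfUnit G 1 = 1 :=
    PowerSeries.mul_invOfUnit G 1 (by rw [hGconst]; simp)
  -- map everything to `ZMod 4`
  set i4 : ℤ →+* ZMod 4 := Int.castRingHom (ZMod 4) with hi4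
  have hmapF : ∀ k : ℕ, PowerSeries.map i4 (fTrunc k M) = FF k M := by
    intro k
    rw [fTrunc, FF, map_prod]
    refine Finset.prod_congr rfl fun i _ => ?_
    rw [map_sub, map_one, map_pow, PowerSeries.map_X]
  set J : PowerSeries (ZMod 4) := PowerSeries.map i4 (PowerSeries.invOfUnit G 1) with hJdef
  have hGJ : (FF 1 M ^ 6 * FF 2 M ^ 3) * J = 1 := by
    have h := congrArg (PowerSeries.map i4) hGI
    rw [map_mul, map_one, hGdef, map_mul, map_pow, map_pow, hmapF 1, hmapF 2] at h
    exact h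
  -- the two key congruences
  have k1 : EqUpTo M (FF 1 M ^ 2) (FF 2 M * (1 + 2 * UU 1 M)) := by
    have h := key 1 M one_pos
    norm_num at h
    exact h
  have k2 : EqUpTo M (FF 2 M ^ 2) (FF 4 M * (1 + 2 * UU 2 M)) := by
    have h := key 2 M two_pos
    norm_num at h
    exact h
  set Φ1 : PowerSeries (ZMod 4) := 1 + 2 * UU 1 M with hΦ1def
  set Φ2 : PowerSeries (ZMod 4) := 1 + 2 * UU 2 M with hΦ2def
  have hΦ1sq : Φ1 ^ 2 = 1 := by
    rw [hΦ1def]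
    linear_combination (UU 1 M + UU 1 M ^ 2) * two_two_zero4
  have hΦ2sq : Φ2 ^ 2 = 1 := by
    rw [hΦ2def]
    linear_combination (UU 2 M + UU 2 M ^ 2) * two_two_zero4
  have hA : EqUpTo M (FF 1 M ^ 6) (FF 2 M ^ 3 * Φ1 ^ 3) := by
    have h := k1.pow 3
    rw [← pow_mul, mul_pow] at h
    norm_num at h
    exact h
  have hB : EqUpTo M (FF 2 M ^ 6) (FF 4 M ^ 3 * Φ2 ^ 3) := by
    have h := k2.pow 3
    rw [← pow_mul, mul_pow] at h
    norm_num at h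
    exact h
  have hMain : EqUpTo M (FF 1 M ^ 6 * (FF 2 M ^ 3 * (Φ1 * Φ2))) (FF 4 M ^ 3) := by
    have s1 : EqUpTo M (FF 1 M ^ 6 * (FF 2 M ^ 3 * (Φ1 * Φ2)))
        ((FF 2 M ^ 3 * Φ1 ^ 3) * (FF 2 M ^ 3 * (Φ1 * Φ2))) := hA.mul (EqUpTo.refl _)
    have e1 : (FF 2 M ^ 3 * Φ1 ^ 3) * (FF 2 M ^ 3 * (Φ1 * Φ2)) =
        FF 2 M ^ 6 * (Φ1 ^ 4 * Φ2) := by ring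
    have s2 : EqUpTo M (FF 2 M ^ 6 * (Φ1 ^ 4 * Φ2))
        ((FF 4 M ^ 3 * Φ2 ^ 3) * (Φ1 ^ 4 * Φ2)) := hB.mul (EqUpTo.refl _)
    have e2 : (FF 4 M ^ 3 * Φ2 ^ 3) * (Φ1 ^ 4 * Φ2) =
        FF 4 M ^ 3 * ((Φ1 ^ 2) ^ 2 * (Φ2 ^ 2) ^ 2) := by ring
    have e3 : FF 4 M ^ 3 * ((Φ1 ^ 2) ^ 2 * (Φ2 ^ 2) ^ 2) = FF 4 M ^ 3 := by
      rw [hΦ1sq, hΦ2sq]; ring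
    refine s1.trans ?_
    rw [e1]
    refine s2.trans ?_
    rw [e2, e3]
    exact EqUpTo.refl _
  have hFinal : EqUpTo M (Φ1 * Φ2) (FF 4 M ^ 3 * J) := by
    have h0 : EqUpTo M (J * (FF 1 M ^ 6 * (FF 2 M ^ 3 * (Φ1 * Φ2)))) (J * FF 4 M ^ 3) :=
      hMain.mul_left J
    have e1 : J * (FF 1 M ^ 6 * (FF 2 M ^ 3 * (Φ1 * Φ2))) =
        ((FF 1 M ^ 6 * FF 2 M ^ 3) * J) * (Φ1 * Φ2) := by ring
    have e2 : J * FF 4 M ^ 3 = FF 4 M ^ 3 * J := by ring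
    rw [e1, hGJ, one_mul, e2] at h0
    exact h0
  -- coefficient computation
  have hUU : ∀ d : ℕ, (∀ k : ℕ, M ≠ d * k ^ 2) →
      PowerSeries.coeff M (UU d M) = 0 := by
    intro d hd
    rw [UU, map_sum]
    refine Finset.sum_eq_zero fun k _ => ?_
    rw [PowerSeries.coeff_X_pow, if_neg (hd k)]
  have hU1 : PowerSeries.coeff M (UU 1 M) = 0 := by
    refine hUU 1 fun k h => not_sq n α k ?_
    rw [one_mul] at h; omega
  have hU2 : PowerSeries.coeff M (UU 2 M) = 0 := by
    refine hUU 2 fun k h => not_two_sq n α k ?_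
    omega
  have hprodΦ : Φ1 * Φ2 = 1 + 2 * UU 1 M + 2 * UU 2 M := by
    rw [hΦ1def, hΦ2def]
    linear_combination (UU 1 M * UU 2 M) * two_two_zero4
  have hcoeffΦ : PowerSeries.coeff M (Φ1 * Φ2) = 0 := by
    rw [hprodΦ, map_add, map_add, coeff_two_mul4, coeff_two_mul4, hU1, hU2,
      PowerSeries.coeff_one, if_neg hMpos.ne']
    ring
  -- connect with `bt`
  have hbt : ((bt M : ZMod 4)) = PowerSeries.coeff M (FF 4 M ^ 3 * J) := by
    have hcast : ((bt M : ZMod 4)) = i4 (bt M) := by rw [hi4]; rfl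
    rw [hcast]
    unfold bt
    rw [← PowerSeries.coeff_map, map_mul, map_pow, hmapF 4]
  have hzero : ((bt M : ZMod 4)) = 0 := by
    rw [hbt, ← hFinal M le_rfl, hcoeffΦ]
  -- conclude
  have : ((bt M : ZMod 4)) = (((0 : ℤ) : ZMod 4)) := by rw [hzero]; norm_num
  exact (ZMod.intCast_eq_intCast_iff _ _ _).mp this
end

section
/- For all integers n ≥ 0 and k ≥ 0, b_{2k+1}(8n+3) ≡ 0 (mod 4), where b_m denotes the overcubic partition m-tuples function. -/
open PowerSeries
open Finset

/-- `b m n` is the `n`-th coefficient of `f₄ᵐ / (f₁^{2m} f₂ᵐ)`, the number of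
overcubic partition `m`-tuples of `n`. -/
noncomputable def b (m n : ℕ) : ℤ :=
  PowerSeries.coeff n
    ((fTrunc 4 n) ^ m * PowerSeries.invOfUnit ((fTrunc 1 n) ^ (2 * m) * (fTrunc 2 n) ^ m) 1)

/-! ### Auxiliary machinery -/

/-- the truncated product `∏_{i=1}^N (1 - X^{k i})` over any commutative ring -/
noncomputable def Ftr (R : Type*) [CommRing R] (k N : ℕ) : R⟦X⟧ :=
  ∏ i ∈ Finset.Icc 1 N, (1 - (PowerSeries.X : R⟦X⟧) ^ (k * i))

lemma fTrunc_eq_Ftr (k N : ℕ) : fTrunc k N = Ftr ℤ k N := rfl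

section Generic

variable {R : Type*} [CommRing R]

lemma map_Ftr {S : Type*} [CommRing S] (φ : R →+* S) (k N : ℕ) :
    PowerSeries.map φ (Ftr R k N) = Ftr S k N := by
  unfold Ftr
  rw [map_prod]
  refine Finset.prod_congr rfl fun i _ => ?_
  rw [map_sub, map_one, map_pow, PowerSeries.map_X]

lemma constantCoeff_Ftr (k N : ℕ) (hk : 0 < k) : constantCoeff (R := R) (Ftr R k N) = 1 := by
  unfold Ftr
  rw [map_prod]
  refine Finset.prod_eq_one fun i hi => ?_
  have hi1 : 1 ≤ i := (Finset.mem_Icc.mp hi).1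
  rw [map_sub, map_one, map_pow, PowerSeries.constantCoeff_X, zero_pow (by positivity), sub_zero]

/-- cancel a series with constant coefficient 1 -/
lemma cancel_constOne {u x y : R⟦X⟧} (hu : constantCoeff (R := R) u = 1) (h : x * u = y * u) : x = y := by
  have hinv : u * PowerSeries.invOfUnit u 1 = 1 := PowerSeries.mul_invOfUnit u 1 (by simpa using hu)
  calc x = x * (u * PowerSeries.invOfUnit u 1) := by rw [hinv, mul_one]
    _ = (x * u) * PowerSeries.invOfUnit u 1 := by ring
    _ = (y * u) * PowerSeries.invOfUnit u 1 := by rw [h]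
    _ = y * (u * PowerSeries.invOfUnit u 1) := by ring
    _ = y := by rw [hinv, mul_one]

lemma invOfUnit_unique {u g : R⟦X⟧} (hu : constantCoeff (R := R) u = 1) (h : u * g = 1) :
    PowerSeries.invOfUnit u 1 = g := by
  have hinv : u * PowerSeries.invOfUnit u 1 = 1 := PowerSeries.mul_invOfUnit u 1 (by simpa using hu)
  refine cancel_constOne hu ?_
  rw [mul_comm _ u, mul_comm _ u, hinv, h]

/-- the geometric series `∑_{d ∣ m} X^m` is the inverse of `1 - X^d` -/
lemma one_sub_X_pow_mul_geom (d : ℕ) (hd : 0 < d) :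
    (1 - (X : R⟦X⟧) ^ d) * (PowerSeries.mk fun m => if d ∣ m then (1 : R) else 0) = 1 := by
  set g : R⟦X⟧ := PowerSeries.mk fun m => if d ∣ m then (1 : R) else 0 with hg
  ext m
  rw [sub_mul, one_mul, map_sub, PowerSeries.coeff_one]
  rcases Nat.lt_or_ge m d with hm | hm
  · have hx : PowerSeries.coeff (R := R) m ((X : R⟦X⟧) ^ d * g) = 0 := by
      rw [PowerSeries.coeff_X_pow_mul']
      simp [Nat.not_le.mpr hm]
    rw [hx, sub_zero, hg, PowerSeries.coeff_mk]
    by_cases h0 : m = 0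
    · simp [h0]
    · rw [if_neg h0, if_neg]
      intro hdvd
      exact absurd (Nat.le_of_dvd (by omega) hdvd) (by omega)
  · have hm0 : m ≠ 0 := by omega
    rw [if_neg hm0, PowerSeries.coeff_X_pow_mul', if_pos (by omega), PowerSeries.coeff_mk,
      PowerSeries.coeff_mk]
    have hiff : d ∣ m ↔ d ∣ m - d := by
      constructor
      · intro h; exact (Nat.dvd_sub h dvd_rfl)
      · intro h; have := Nat.dvd_add h (dvd_refl d); rwa [Nat.sub_add_cancel hm] at this
    by_cases hdm : d ∣ m
    · rw [if_pos hdm, if_pos (hiff.mp hdm), sub_self]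
    · rw [if_neg hdm, if_neg (fun hh => hdm (hiff.mpr hh)), sub_self]

lemma coeff_inv_one_sub_X_pow (d m : ℕ) (hd : 0 < d) :
    PowerSeries.coeff (R := R) m (PowerSeries.invOfUnit (1 - (X : R⟦X⟧) ^ d) 1)
      = if d ∣ m then 1 else 0 := by
  rw [invOfUnit_unique (u := 1 - (X : R⟦X⟧) ^ d) (by
      rw [map_sub, map_one, map_pow, PowerSeries.constantCoeff_X, zero_pow (by omega), sub_zero])
    (one_sub_X_pow_mul_geom d hd), PowerSeries.coeff_mk]

/-- coefficients vanish at odd indices -/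
def OddZero (f : R⟦X⟧) : Prop := ∀ j : ℕ, Odd j → PowerSeries.coeff (R := R) j f = 0

lemma oddZero_one_sub_X_pow {d : ℕ} (hd : Even d) : OddZero (1 - (X : R⟦X⟧) ^ d) := by
  intro j hj
  have hj0 : j ≠ 0 := by rintro rfl; simp at hj
  rw [map_sub, PowerSeries.coeff_one, if_neg hj0, PowerSeries.coeff_X_pow, if_neg, sub_zero]
  rintro rfl
  exact (Nat.not_even_iff_odd.mpr hj) hd

lemma OddZero.mul {f g : R⟦X⟧} (hf : OddZero f) (hg : OddZero g) : OddZero (f * g) := by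
  intro j hj
  rw [PowerSeries.coeff_mul]
  refine Finset.sum_eq_zero fun p hp => ?_
  rw [Finset.HasAntidiagonal.mem_antidiagonal] at hp
  rcases Nat.even_or_odd p.1 with h1 | h1
  · have h2 : Odd p.2 := by
      rw [Nat.odd_iff] at hj ⊢; rw [Nat.even_iff] at h1; omega
    rw [hg _ h2, mul_zero]
  · rw [hf _ h1, zero_mul]

lemma OddZero.prod {ι : Type*} {s : Finset ι} {f : ι → R⟦X⟧} (h : ∀ i ∈ s, OddZero (f i)) :
    OddZero (∏ i ∈ s, f i) := by
  classical
  induction s using Finset.induction_on with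
  | empty =>
    intro j hj
    have hj0 : j ≠ 0 := by rintro rfl; simp at hj
    simp [PowerSeries.coeff_one, hj0]
  | insert a s' hns ih =>
    rw [Finset.prod_insert hns]
    exact (h a (mem_insert_self a s')).mul (ih fun i hi => h i (mem_insert_of_mem hi))

lemma OddZero.of_mul_eq_one {f g : R⟦X⟧} (hf : OddZero f) (h : f * g = 1) : OddZero g := by
  have h00 : PowerSeries.coeff (R := R) 0 f * PowerSeries.coeff (R := R) 0 g = 1 := by
    have := congrArg (constantCoeff (R := R)) h
    rw [map_mul, map_one] at this
    simpa [PowerSeries.coeff_zero_eq_constantCoeff] using this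
  intro j hj
  induction j using Nat.strong_induction_on with
  | _ j ih =>
    have hcj : PowerSeries.coeff (R := R) j (f * g) = 0 := by
      rw [h, PowerSeries.coeff_one, if_neg (by rintro rfl; simp at hj)]
    rw [PowerSeries.coeff_mul, Finset.sum_eq_single (0, j)] at hcj
    · calc PowerSeries.coeff (R := R) j g
          = (PowerSeries.coeff (R := R) 0 f * PowerSeries.coeff (R := R) 0 g) * PowerSeries.coeff (R := R) j g := by
            rw [h00, one_mul]
        _ = PowerSeries.coeff (R := R) 0 g * (PowerSeries.coeff (R := R) 0 f * PowerSeries.coeff (R := R) j g) := by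
            ring
        _ = 0 := by rw [hcj, mul_zero]
    · intro p hp hne
      rw [Finset.HasAntidiagonal.mem_antidiagonal] at hp
      rcases Nat.even_or_odd p.1 with h1 | h1
      · have hp1 : p.1 ≠ 0 := by
          rintro h0
          exact hne (Prod.ext_iff.mpr ⟨h0, by omega⟩)
        have h2 : Odd p.2 := by
          rw [Nat.odd_iff] at hj ⊢; rw [Nat.even_iff] at h1; omega
        have hlt : p.2 < j := by omega
        rw [ih p.2 hlt h2, mul_zero]
      · rw [hf _ h1, zero_mul]
    · intro hmem
      exact absurd (Finset.HasAntidiagonal.mem_antidiagonal.mpr (by simp)) hmem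

/-- mod-8-style product decomposition -/
lemma prod_decomp {ι : Type*} [DecidableEq ι] (s : Finset ι) (a bf c : ι → R) :
    ∃ T : R, ∏ i ∈ s, (a i + 4 * bf i + 8 * c i)
      = ∏ i ∈ s, a i + 4 * ∑ i ∈ s, bf i * ∏ j ∈ s.erase i, a j + 8 * T := by
  induction s using Finset.induction_on with
  | empty => exact ⟨0, by simp⟩
  | insert k s hks ih =>
    obtain ⟨T, hT⟩ := ih
    refine ⟨a k * T + 2 * bf k * (∑ i ∈ s, bf i * ∏ j ∈ s.erase i, a j)
      + 4 * bf k * T + c k * (∏ i ∈ s, a i + 4 * ∑ i ∈ s, bf i * ∏ j ∈ s.erase i, a j + 8 * T),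
      ?_⟩
    rw [Finset.prod_insert hks, hT, Finset.prod_insert hks, Finset.sum_insert hks,
      Finset.erase_insert hks]
    have herase : ∀ i ∈ s, (insert k s).erase i = insert k (s.erase i) := by
      intro i hi
      rw [Finset.erase_insert_of_ne (by rintro rfl; exact hks hi)]
    have hsum : ∑ i ∈ s, bf i * ∏ j ∈ (insert k s).erase i, a j
        = a k * ∑ i ∈ s, bf i * ∏ j ∈ s.erase i, a j := by
      rw [Finset.mul_sum]
      refine Finset.sum_congr rfl fun i hi => ?_
      rw [herase i hi, Finset.prod_insert (fun hmem => hks (Finset.erase_subset _ _ hmem))]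
      ring
    rw [hsum]
    ring

lemma power_collapse (k : ℕ) (A1 A2 A4 : R) (ha : A1 ^ 4 = A2 ^ 2) (hb : A2 ^ 4 = A4 ^ 2) :
    A4 ^ (2 * k + 1) * (A1 ^ 2 * A2) = A4 * (A1 ^ (2 * (2 * k + 1)) * A2 ^ (2 * k + 1)) := by
  have h1 : A1 ^ (2 * (2 * k + 1)) = (A1 ^ 4) ^ k * A1 ^ 2 := by ring
  have h2 : A2 ^ (2 * k + 1) = A2 ^ (2 * k) * A2 := by ring
  rw [h1, ha, h2]
  have h3 : A4 * ((A2 ^ 2) ^ k * A1 ^ 2 * (A2 ^ (2 * k) * A2))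
      = (A2 ^ 4) ^ k * (A4 * (A1 ^ 2 * A2)) := by ring
  rw [h3, hb]
  ring

end Generic

/-! ### Characteristic identities -/

lemma four_eq_zero_ps : (4 : (ZMod 4)⟦X⟧) = 0 := by
  have h : (4 : (ZMod 4)⟦X⟧) = PowerSeries.C (R := (ZMod 4)) (4 : ZMod 4) :=
    (map_ofNat (PowerSeries.C (R := (ZMod 4))) 4).symm
  rw [h, show (4 : ZMod 4) = 0 from by decide, map_zero]

lemma two_eq_zero_ps : (2 : (ZMod 2)⟦X⟧) = 0 := by
  have h : (2 : (ZMod 2)⟦X⟧) = PowerSeries.C (R := (ZMod 2)) (2 : ZMod 2) :=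
    (map_ofNat (PowerSeries.C (R := (ZMod 2))) 2).symm
  rw [h, show (2 : ZMod 2) = 0 from by decide, map_zero]

lemma pow4_factor {R : Type*} [CommRing R] (h4 : (4 : R) = 0) (x : R) :
    (1 - x) ^ 4 = (1 - x ^ 2) ^ 2 := by
  linear_combination (-x + 2 * x ^ 2 - x ^ 3) * h4

lemma pow2_factor {R : Type*} [CommRing R] (h2 : (2 : R) = 0) (x : R) :
    (1 - x) ^ 2 = 1 - x ^ 2 := by
  linear_combination (x ^ 2 - x) * h2

lemma Ftr_one_pow4 (N : ℕ) : (Ftr (ZMod 4) 1 N) ^ 4 = (Ftr (ZMod 4) 2 N) ^ 2 := by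
  unfold Ftr
  rw [← Finset.prod_pow, ← Finset.prod_pow]
  refine Finset.prod_congr rfl fun i _ => ?_
  rw [pow4_factor four_eq_zero_ps ((X : (ZMod 4)⟦X⟧) ^ (1 * i))]
  congr 1; rw [← pow_mul]; congr 1; ring

lemma Ftr_two_pow4 (N : ℕ) : (Ftr (ZMod 4) 2 N) ^ 4 = (Ftr (ZMod 4) 4 N) ^ 2 := by
  unfold Ftr
  rw [← Finset.prod_pow, ← Finset.prod_pow]
  refine Finset.prod_congr rfl fun i _ => ?_
  rw [pow4_factor four_eq_zero_ps ((X : (ZMod 4)⟦X⟧) ^ (2 * i))]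
  congr 1; rw [← pow_mul]; congr 1; ring

lemma Ftr_one_sq (N : ℕ) : (Ftr (ZMod 2) 1 N) ^ 2 = Ftr (ZMod 2) 2 N := by
  unfold Ftr
  rw [← Finset.prod_pow]
  refine Finset.prod_congr rfl fun i _ => ?_
  rw [pow2_factor two_eq_zero_ps ((X : (ZMod 2)⟦X⟧) ^ (1 * i))]
  congr 1; rw [← pow_mul]; congr 1; ring

lemma Ftr_two_sq (N : ℕ) : (Ftr (ZMod 2) 2 N) ^ 2 = Ftr (ZMod 2) 4 N := by
  unfold Ftr
  rw [← Finset.prod_pow]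
  refine Finset.prod_congr rfl fun i _ => ?_
  rw [pow2_factor two_eq_zero_ps ((X : (ZMod 2)⟦X⟧) ^ (2 * i))]
  congr 1; rw [← pow_mul]; congr 1; ring

/-- coefficient of odd index of a square vanishes in char 2 -/
lemma coeff_odd_sq (f : (ZMod 2)⟦X⟧) {j : ℕ} (hj : Odd j) :
    PowerSeries.coeff (R := (ZMod 2)) j (f ^ 2) = 0 := by
  rw [sq, PowerSeries.coeff_mul]
  refine Finset.sum_involution (fun p _ => (p.2, p.1)) (fun p hp => ?_) (fun p hp _ => ?_)
    (fun p hp => ?_) (fun p hp => rfl)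
  · show _ * _ + _ * _ = 0
    rw [mul_comm]
    exact CharTwo.add_self_eq_zero _
  · intro hpe
    have h12 : p.1 = p.2 := (Prod.ext_iff.mp hpe).2
    rw [Finset.HasAntidiagonal.mem_antidiagonal] at hp
    rw [Nat.odd_iff] at hj
    omega
  · show (p.2, p.1) ∈ _
    rw [Finset.HasAntidiagonal.mem_antidiagonal] at hp ⊢; omega
/-! ### Divisor counting -/

lemma sum_div_indicator (N : ℕ) (hN : N % 4 = 3) :
    ∑ i ∈ Finset.Icc 1 N, (if i ∣ N then (1 : ZMod 2) else 0) = 0 := by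
  have hN0 : N ≠ 0 := by omega
  rw [← Finset.sum_filter]
  refine Finset.sum_involution (fun i _ => N / i) (fun i hi => ?_) (fun i hi _ => ?_)
    (fun i hi => ?_) (fun i hi => ?_)
  · decide
  · -- N / i ≠ i
    rw [Finset.mem_filter, Finset.mem_Icc] at hi
    obtain ⟨⟨hi1, hiN⟩, hdvd⟩ := hi
    intro heq
    change N / i = i at heq
    have hsq : i * i = N := by
      have := Nat.div_mul_cancel hdvd
      rw [heq] at this
      exact this
    have hc : ((i : ZMod 4)) * (i : ZMod 4) = ((N : ZMod 4)) := by
      rw [← Nat.cast_mul, hsq]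
    have hN4 : ((N : ZMod 4)) = 3 := by
      conv_lhs => rw [← Nat.div_add_mod N 4, hN]
      push_cast
      rw [show (4 : ZMod 4) = 0 from by decide]
      ring
    rw [hN4] at hc
    revert hc
    generalize (i : ZMod 4) = x
    revert x
    decide
  · -- membership
    rw [Finset.mem_filter, Finset.mem_Icc] at hi ⊢
    obtain ⟨⟨hi1, hiN⟩, hdvd⟩ := hi
    refine ⟨⟨(Nat.one_le_div_iff (by omega)).mpr hiN, Nat.div_le_self N i⟩,
      Nat.div_dvd_of_dvd hdvd⟩
  · -- involutive
    rw [Finset.mem_filter, Finset.mem_Icc] at hi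
    exact Nat.div_div_self hi.2 hN0

/-! ### The per-index identity in characteristic 2 -/

lemma per_i (i : ℕ) (hi : 1 ≤ i) :
    -((X : (ZMod 2)⟦X⟧) ^ (1 * i) + ((X : (ZMod 2)⟦X⟧) ^ (1 * i)) ^ 3)
      = (X : (ZMod 2)⟦X⟧) ^ (1 * i)
          * PowerSeries.invOfUnit (1 - (X : (ZMod 2)⟦X⟧) ^ (2 * i)) 1
          * (1 - (X : (ZMod 2)⟦X⟧) ^ (4 * i)) := by
  have hneg : ∀ z : (ZMod 2)⟦X⟧, -z = z := fun z => by
    have h2z : (2 : (ZMod 2)⟦X⟧) * z = 0 := by rw [two_eq_zero_ps, zero_mul]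
    linear_combination -h2z
  have h2 : (X : (ZMod 2)⟦X⟧) ^ (2 * i) = ((X : (ZMod 2)⟦X⟧) ^ (1 * i)) ^ 2 := by
    rw [← pow_mul]; congr 1; ring
  have h4 : (X : (ZMod 2)⟦X⟧) ^ (4 * i) = ((X : (ZMod 2)⟦X⟧) ^ (1 * i)) ^ 4 := by
    rw [← pow_mul]; congr 1; ring
  have hconst : constantCoeff (R := (ZMod 2)) (1 - (X : (ZMod 2)⟦X⟧) ^ (2 * i)) = 1 := by
    rw [map_sub, map_one, map_pow, PowerSeries.constantCoeff_X, zero_pow (by omega), sub_zero]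
  have hinv : (1 - (X : (ZMod 2)⟦X⟧) ^ (2 * i))
      * PowerSeries.invOfUnit (1 - (X : (ZMod 2)⟦X⟧) ^ (2 * i)) 1 = 1 :=
    PowerSeries.mul_invOfUnit _ 1 (by simpa using hconst)
  have hsplit : (1 - (X : (ZMod 2)⟦X⟧) ^ (4 * i))
      = (1 - (X : (ZMod 2)⟦X⟧) ^ (2 * i)) * (1 + (X : (ZMod 2)⟦X⟧) ^ (2 * i)) := by
    rw [h4, h2]; ring
  rw [hsplit, hneg]
  calc (X : (ZMod 2)⟦X⟧) ^ (1 * i) + ((X : (ZMod 2)⟦X⟧) ^ (1 * i)) ^ 3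
      = (X : (ZMod 2)⟦X⟧) ^ (1 * i) * (1 + (X : (ZMod 2)⟦X⟧) ^ (2 * i)) := by rw [h2]; ring
    _ = (X : (ZMod 2)⟦X⟧) ^ (1 * i)
          * ((1 - (X : (ZMod 2)⟦X⟧) ^ (2 * i))
            * PowerSeries.invOfUnit (1 - (X : (ZMod 2)⟦X⟧) ^ (2 * i)) 1)
          * (1 + (X : (ZMod 2)⟦X⟧) ^ (2 * i)) := by rw [hinv, mul_one]
    _ = (X : (ZMod 2)⟦X⟧) ^ (1 * i)
          * PowerSeries.invOfUnit (1 - (X : (ZMod 2)⟦X⟧) ^ (2 * i)) 1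
          * ((1 - (X : (ZMod 2)⟦X⟧) ^ (2 * i)) * (1 + (X : (ZMod 2)⟦X⟧) ^ (2 * i))) := by ring
/-! ### The key vanishing: `4 ∣ coeff N (F1² / F2)` for `N ≡ 3 mod 4` -/

lemma keyPhi (N : ℕ) (hN : N % 4 = 3) :
    (4 : ℤ) ∣ PowerSeries.coeff (R := ℤ) N
      (Ftr ℤ 1 N ^ 2 * PowerSeries.invOfUnit (Ftr ℤ 2 N) 1) := by
  classical
  have hN0 : N ≠ 0 := by omega
  have hNodd : Odd N := by rw [Nat.odd_iff]; omega
  set F1 : ℤ⟦X⟧ := Ftr ℤ 1 N with hF1def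
  set F2 : ℤ⟦X⟧ := Ftr ℤ 2 N with hF2def
  set Φ : ℤ⟦X⟧ := F1 ^ 2 * PowerSeries.invOfUnit F2 1 with hΦdef
  have hc2 : constantCoeff (R := ℤ) F2 = 1 := constantCoeff_Ftr 2 N (by norm_num)
  have hc1 : constantCoeff (R := ℤ) F1 = 1 := constantCoeff_Ftr 1 N one_pos
  have hF2inv : F2 * PowerSeries.invOfUnit F2 1 = 1 :=
    PowerSeries.mul_invOfUnit F2 1 (by simpa using hc2)
  have hΦF2 : Φ * F2 = F1 ^ 2 := by
    calc Φ * F2 = F1 ^ 2 * (F2 * PowerSeries.invOfUnit F2 1) := by rw [hΦdef]; ring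
      _ = F1 ^ 2 := by rw [hF2inv, mul_one]
  -- Φ ≡ 1 (mod 2)
  have hpm2Φ : PowerSeries.map (Int.castRingHom (ZMod 2)) Φ = 1 := by
    have hcan : constantCoeff (R := (ZMod 2)) (Ftr (ZMod 2) 2 N) = 1 :=
      constantCoeff_Ftr 2 N (by norm_num)
    apply cancel_constOne hcan
    have h := congrArg (PowerSeries.map (Int.castRingHom (ZMod 2))) hΦF2
    rw [map_mul, map_pow, hF2def, hF1def, map_Ftr, map_Ftr, Ftr_one_sq] at h
    rw [h, one_mul]
  have heven : ∀ j, 1 ≤ j → (2 : ℤ) ∣ PowerSeries.coeff (R := ℤ) j Φ := by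
    intro j hj
    have h0 : PowerSeries.coeff (R := (ZMod 2)) j (PowerSeries.map (Int.castRingHom (ZMod 2)) Φ) = 0 := by
      rw [hpm2Φ, PowerSeries.coeff_one, if_neg (by omega)]
    rw [PowerSeries.coeff_map, Int.coe_castRingHom] at h0
    exact_mod_cast (ZMod.intCast_zmod_eq_zero_iff_dvd _ 2).mp h0
  have hΦ0 : PowerSeries.coeff (R := ℤ) 0 Φ = 1 := by
    have h := congrArg (constantCoeff (R := ℤ)) hΦF2
    rw [map_mul, map_pow, hc2, hc1, mul_one, one_pow] at h
    simpa [PowerSeries.coeff_zero_eq_constantCoeff] using h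
  -- the half-series V
  set V : ℤ⟦X⟧ := PowerSeries.mk (fun j => PowerSeries.coeff (R := ℤ) j (Φ - 1) / 2) with hVdef
  have hEeven : ∀ j, (2 : ℤ) ∣ PowerSeries.coeff (R := ℤ) j (Φ - 1) := by
    intro j
    rcases Nat.eq_zero_or_pos j with rfl | hj
    · rw [map_sub, hΦ0, PowerSeries.coeff_one, if_pos rfl, sub_self]
      exact dvd_zero 2
    · rw [map_sub, PowerSeries.coeff_one, if_neg (by omega), sub_zero]
      exact heven j hj
  have h2ps : (2 : ℤ⟦X⟧) = PowerSeries.C (R := ℤ) 2 := (map_ofNat (PowerSeries.C (R := ℤ)) 2).symm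
  have hV : Φ = 1 + 2 * V := by
    ext j
    rw [map_add, h2ps, PowerSeries.coeff_C_mul, hVdef, PowerSeries.coeff_mk]
    have h := Int.mul_ediv_cancel' (hEeven j)
    rw [map_sub] at h ⊢
    omega
  -- mod 8 decomposition over ℤ
  obtain ⟨T, hT⟩ := prod_decomp (Finset.Icc 1 N)
    (fun i => (1 - ((X : ℤ⟦X⟧) ^ (1 * i)) ^ 2) ^ 2)
    (fun i => -((X : ℤ⟦X⟧) ^ (1 * i) + ((X : ℤ⟦X⟧) ^ (1 * i)) ^ 3))
    (fun i => ((X : ℤ⟦X⟧) ^ (1 * i)) ^ 2)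
  set S : ℤ⟦X⟧ := ∑ i ∈ Finset.Icc 1 N,
      -((X : ℤ⟦X⟧) ^ (1 * i) + ((X : ℤ⟦X⟧) ^ (1 * i)) ^ 3)
        * ∏ j ∈ (Finset.Icc 1 N).erase i, (1 - ((X : ℤ⟦X⟧) ^ (1 * j)) ^ 2) ^ 2 with hSdef
  have hprod_a : ∏ i ∈ Finset.Icc 1 N, (1 - ((X : ℤ⟦X⟧) ^ (1 * i)) ^ 2) ^ 2 = F2 ^ 2 := by
    rw [hF2def]
    unfold Ftr
    rw [← Finset.prod_pow]
    refine Finset.prod_congr rfl fun i _ => ?_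
    congr 2
    rw [← pow_mul]; congr 1; ring
  have hF14 : F1 ^ 4 = ∏ i ∈ Finset.Icc 1 N,
      ((1 - ((X : ℤ⟦X⟧) ^ (1 * i)) ^ 2) ^ 2
        + 4 * -((X : ℤ⟦X⟧) ^ (1 * i) + ((X : ℤ⟦X⟧) ^ (1 * i)) ^ 3)
        + 8 * ((X : ℤ⟦X⟧) ^ (1 * i)) ^ 2) := by
    rw [hF1def]
    unfold Ftr
    rw [← Finset.prod_pow]
    refine Finset.prod_congr rfl fun i _ => ?_
    ring
  have hbig : (1 + 2 * V) ^ 2 * F2 ^ 2 = F2 ^ 2 + 4 * S + 8 * T := by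
    rw [← hV]
    calc Φ ^ 2 * F2 ^ 2 = (Φ * F2) ^ 2 := by ring
      _ = (F1 ^ 2) ^ 2 := by rw [hΦF2]
      _ = F1 ^ 4 := by ring
      _ = _ := by rw [hF14, hT, hprod_a, hSdef]
  have h4ne : (4 : ℤ⟦X⟧) ≠ 0 := by
    intro h
    have h0 := congrArg (constantCoeff (R := ℤ)) h
    rw [map_ofNat, map_zero] at h0
    norm_num at h0
  have hkey : (V + V ^ 2) * F2 ^ 2 = S + 2 * T :=
    mul_left_cancel₀ h4ne (by linear_combination hbig)
  -- map to ZMod 2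
  set v : (ZMod 2)⟦X⟧ := PowerSeries.map (Int.castRingHom (ZMod 2)) V with hvdef
  have hm := congrArg (PowerSeries.map (Int.castRingHom (ZMod 2))) hkey
  rw [map_mul, map_add, map_pow, map_pow, map_add, map_mul, hF2def, map_Ftr, Ftr_two_sq] at hm
  have h2T : PowerSeries.map (Int.castRingHom (ZMod 2)) 2
      * PowerSeries.map (Int.castRingHom (ZMod 2)) T = 0 := by
    rw [show PowerSeries.map (Int.castRingHom (ZMod 2)) (2 : ℤ⟦X⟧) = (2 : (ZMod 2)⟦X⟧) from by
        rw [map_ofNat], two_eq_zero_ps, zero_mul]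
  rw [h2T, add_zero] at hm
  -- identify the image of S
  have hS2 : PowerSeries.map (Int.castRingHom (ZMod 2)) S
      = (∑ i ∈ Finset.Icc 1 N,
          (X : (ZMod 2)⟦X⟧) ^ (1 * i)
            * PowerSeries.invOfUnit (1 - (X : (ZMod 2)⟦X⟧) ^ (2 * i)) 1)
        * Ftr (ZMod 2) 4 N := by
    rw [hSdef, map_sum, Finset.sum_mul]
    refine Finset.sum_congr rfl fun i hi => ?_
    have hi1 : 1 ≤ i := (Finset.mem_Icc.mp hi).1
    rw [map_mul, map_prod]
    have hmb : PowerSeries.map (Int.castRingHom (ZMod 2))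
        (-((X : ℤ⟦X⟧) ^ (1 * i) + ((X : ℤ⟦X⟧) ^ (1 * i)) ^ 3))
        = -((X : (ZMod 2)⟦X⟧) ^ (1 * i) + ((X : (ZMod 2)⟦X⟧) ^ (1 * i)) ^ 3) := by
      rw [map_neg, map_add, map_pow, map_pow, map_pow, PowerSeries.map_X]
    have hma : ∀ j, PowerSeries.map (Int.castRingHom (ZMod 2))
        ((1 - ((X : ℤ⟦X⟧) ^ (1 * j)) ^ 2) ^ 2) = 1 - (X : (ZMod 2)⟦X⟧) ^ (4 * j) := by
      intro j
      rw [map_pow, map_sub, map_one, map_pow, map_pow, PowerSeries.map_X,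
        pow2_factor two_eq_zero_ps]
      congr 1
      rw [← pow_mul, ← pow_mul]
      congr 1; ring
    rw [hmb, Finset.prod_congr rfl (fun j _ => hma j), per_i i hi1]
    have : Ftr (ZMod 2) 4 N = (1 - (X : (ZMod 2)⟦X⟧) ^ (4 * i))
        * ∏ j ∈ (Finset.Icc 1 N).erase i, (1 - (X : (ZMod 2)⟦X⟧) ^ (4 * j)) := by
      unfold Ftr
      exact (Finset.mul_prod_erase _ _ hi).symm
    rw [this]
    ring
  rw [hS2] at hm
  -- cancel the unit Ftr (ZMod 2) 4 N
  have hcan4 : constantCoeff (R := (ZMod 2)) (Ftr (ZMod 2) 4 N) = 1 :=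
    constantCoeff_Ftr 4 N (by norm_num)
  have hveq : v + v ^ 2 = ∑ i ∈ Finset.Icc 1 N,
      (X : (ZMod 2)⟦X⟧) ^ (1 * i)
        * PowerSeries.invOfUnit (1 - (X : (ZMod 2)⟦X⟧) ^ (2 * i)) 1 :=
    cancel_constOne hcan4 hm
  -- take coefficient N
  have hcoeff := congrArg (PowerSeries.coeff (R := (ZMod 2)) N) hveq
  rw [map_add, coeff_odd_sq v hNodd, add_zero, map_sum] at hcoeff
  have hterm : ∀ i ∈ Finset.Icc 1 N,
      PowerSeries.coeff (R := (ZMod 2)) N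
        ((X : (ZMod 2)⟦X⟧) ^ (1 * i)
          * PowerSeries.invOfUnit (1 - (X : (ZMod 2)⟦X⟧) ^ (2 * i)) 1)
      = if i ∣ N then 1 else 0 := by
    intro i hi
    obtain ⟨hi1, hiN⟩ := Finset.mem_Icc.mp hi
    rw [PowerSeries.coeff_X_pow_mul', if_pos (by omega),
      coeff_inv_one_sub_X_pow (2 * i) _ (by omega)]
    have harith : 2 * i ∣ N - 1 * i ↔ i ∣ N := by
      rw [one_mul]
      constructor
      · intro h
        have h1 : i ∣ N - i := dvd_trans ⟨2, by ring⟩ h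
        have h2 := Nat.dvd_add h1 (dvd_refl i)
        rwa [Nat.sub_add_cancel hiN] at h2
      · rintro ⟨q, rfl⟩
        have hq : Odd q := by
          rcases Nat.even_or_odd q with hq | hq
          · exact absurd (hq.mul_left i) (Nat.not_even_iff_odd.mpr hNodd)
          · exact hq
        obtain ⟨r, rfl⟩ := hq
        refine ⟨r, ?_⟩
        calc i * (2 * r + 1) - i = i * (2 * r) := by
              rw [Nat.mul_add, mul_one, Nat.add_sub_cancel]
          _ = 2 * i * r := by ring
    rw [if_congr harith rfl rfl]
  rw [Finset.sum_congr rfl hterm, sum_div_indicator N hN] at hcoeff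
  -- conclude
  have hV2 : (2 : ℤ) ∣ PowerSeries.coeff (R := ℤ) N V := by
    have h0 : PowerSeries.coeff (R := (ZMod 2)) N v = 0 := hcoeff
    rw [hvdef, PowerSeries.coeff_map] at h0
    exact_mod_cast (ZMod.intCast_zmod_eq_zero_iff_dvd _ 2).mp h0
  obtain ⟨c, hc⟩ := hV2
  have : PowerSeries.coeff (R := ℤ) N Φ = 4 * c := by
    rw [hV, map_add, PowerSeries.coeff_one, if_neg hN0, h2ps, PowerSeries.coeff_C_mul, hc]
    ring
  rw [hΦdef] at this
  exact ⟨c, this⟩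
/-! ### Main theorem -/

theorem stmt16 (n k : ℕ) : b (2 * k + 1) (8 * n + 3) ≡ 0 [ZMOD 4] := by
  classical
  set N : ℕ := 8 * n + 3 with hNdef
  set m : ℕ := 2 * k + 1 with hmdef
  have hN4 : N % 4 = 3 := by omega
  have hN0 : N ≠ 0 := by omega
  have hNodd : Odd N := by rw [Nat.odd_iff]; omega
  rw [Int.ModEq]
  simp only [Int.zero_emod]
  rw [← Int.dvd_iff_emod_eq_zero]
  have hred : ((b m N : ℤ) : ZMod 4) = 0 → (4 : ℤ) ∣ b m N := by
    intro h
    exact_mod_cast (ZMod.intCast_zmod_eq_zero_iff_dvd (b m N) 4).mp h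
  apply hred
  -- pass to ZMod 4
  have hbval : b m N = PowerSeries.coeff (R := ℤ) N
      (Ftr ℤ 4 N ^ m * PowerSeries.invOfUnit (Ftr ℤ 1 N ^ (2 * m) * Ftr ℤ 2 N ^ m) 1) := rfl
  rw [hbval]
  have hcast : ((PowerSeries.coeff (R := ℤ) N
        (Ftr ℤ 4 N ^ m * PowerSeries.invOfUnit (Ftr ℤ 1 N ^ (2 * m) * Ftr ℤ 2 N ^ m) 1) : ℤ)
        : ZMod 4)
      = PowerSeries.coeff (R := (ZMod 4)) N (PowerSeries.map (Int.castRingHom (ZMod 4))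
          (Ftr ℤ 4 N ^ m * PowerSeries.invOfUnit (Ftr ℤ 1 N ^ (2 * m) * Ftr ℤ 2 N ^ m) 1)) := by
    rw [PowerSeries.coeff_map, Int.coe_castRingHom]
  rw [hcast]
  -- notation in ZMod 4
  set A1 : (ZMod 4)⟦X⟧ := Ftr (ZMod 4) 1 N with hA1
  set A2 : (ZMod 4)⟦X⟧ := Ftr (ZMod 4) 2 N with hA2
  set A4 : (ZMod 4)⟦X⟧ := Ftr (ZMod 4) 4 N with hA4
  set Binv : (ZMod 4)⟦X⟧ := PowerSeries.map (Int.castRingHom (ZMod 4))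
      (PowerSeries.invOfUnit (Ftr ℤ 1 N ^ (2 * m) * Ftr ℤ 2 N ^ m) 1) with hBinv
  have hmapmain : PowerSeries.map (Int.castRingHom (ZMod 4))
      (Ftr ℤ 4 N ^ m * PowerSeries.invOfUnit (Ftr ℤ 1 N ^ (2 * m) * Ftr ℤ 2 N ^ m) 1)
      = A4 ^ m * Binv := by
    rw [map_mul, map_pow, map_Ftr]
  rw [hmapmain]
  -- constant coefficients
  have hcA1 : constantCoeff (R := (ZMod 4)) A1 = 1 := constantCoeff_Ftr 1 N one_pos
  have hcA2 : constantCoeff (R := (ZMod 4)) A2 = 1 := constantCoeff_Ftr 2 N (by norm_num)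
  have hcA4 : constantCoeff (R := (ZMod 4)) A4 = 1 := constantCoeff_Ftr 4 N (by norm_num)
  have hcBZ : constantCoeff (R := ℤ) (Ftr ℤ 1 N ^ (2 * m) * Ftr ℤ 2 N ^ m) = 1 := by
    rw [map_mul, map_pow, map_pow, constantCoeff_Ftr 1 N one_pos,
      constantCoeff_Ftr 2 N (by norm_num), one_pow, one_pow, mul_one]
  have hBmul : (A1 ^ (2 * m) * A2 ^ m) * Binv = 1 := by
    have h := congrArg (PowerSeries.map (Int.castRingHom (ZMod 4)))
      (PowerSeries.mul_invOfUnit (Ftr ℤ 1 N ^ (2 * m) * Ftr ℤ 2 N ^ m) 1 (by simpa using hcBZ))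
    rw [map_mul, map_one, map_mul, map_pow, map_pow, map_Ftr, map_Ftr] at h
    exact h
  -- the power collapse
  have ha : A1 ^ 4 = A2 ^ 2 := Ftr_one_pow4 N
  have hb2 : A2 ^ 4 = A4 ^ 2 := Ftr_two_pow4 N
  have e1 : A4 ^ m * (A1 ^ 2 * A2) = A4 * (A1 ^ (2 * m) * A2 ^ m) := by
    rw [hmdef]
    exact power_collapse k A1 A2 A4 ha hb2
  -- replace by A4 * Pinv
  set P : (ZMod 4)⟦X⟧ := A1 ^ 2 * A2 with hP
  have hcP : constantCoeff (R := (ZMod 4)) P = 1 := by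
    rw [hP, map_mul, map_pow, hcA1, hcA2, one_pow, mul_one]
  set Pinv : (ZMod 4)⟦X⟧ := PowerSeries.invOfUnit P 1 with hPinv
  have hPmul : P * Pinv = 1 := PowerSeries.mul_invOfUnit P 1 (by simpa using hcP)
  have hcoll : A4 ^ m * Binv = A4 * Pinv := by
    calc A4 ^ m * Binv = (A4 ^ m * (A1 ^ 2 * A2)) * Pinv * Binv := by
          rw [show A4 ^ m * (A1 ^ 2 * A2) * Pinv * Binv
              = (A4 ^ m * Binv) * ((A1 ^ 2 * A2) * Pinv) from by ring, ← hP, hPmul, mul_one]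
      _ = (A4 * (A1 ^ (2 * m) * A2 ^ m)) * Pinv * Binv := by rw [e1]
      _ = (A4 * Pinv) * ((A1 ^ (2 * m) * A2 ^ m) * Binv) := by ring
      _ = A4 * Pinv := by rw [hBmul, mul_one]
  rw [hcoll]
  -- factor A4 * Pinv = G * Φ
  set A2inv : (ZMod 4)⟦X⟧ := PowerSeries.invOfUnit A2 1 with hA2inv
  have hA2mul : A2 * A2inv = 1 := PowerSeries.mul_invOfUnit A2 1 (by simpa using hcA2)
  have hcA22 : constantCoeff (R := (ZMod 4)) (A2 ^ 2) = 1 := by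
    rw [map_pow, hcA2, one_pow]
  set A22inv : (ZMod 4)⟦X⟧ := PowerSeries.invOfUnit (A2 ^ 2) 1 with hA22inv
  have hA22mul : A2 ^ 2 * A22inv = 1 := PowerSeries.mul_invOfUnit _ 1 (by simpa using hcA22)
  set Φ4 : (ZMod 4)⟦X⟧ := A1 ^ 2 * A2inv with hΦ4
  set G : (ZMod 4)⟦X⟧ := A4 * A22inv with hG
  have hfac : A4 * Pinv = G * Φ4 := by
    apply cancel_constOne hcP
    calc A4 * Pinv * P = A4 * (P * Pinv) := by ring
      _ = A4 := by rw [hPmul, mul_one]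
      _ = A4 * (A2 ^ 2 * A22inv) := by rw [hA22mul, mul_one]
      _ = A4 * A22inv * (A1 ^ 4) * 1 := by rw [← ha]; ring
      _ = A4 * A22inv * (A1 ^ 4) * (A2 * A2inv) := by rw [hA2mul]
      _ = G * Φ4 * P := by rw [hG, hΦ4, hP]; ring
  rw [hfac]
  -- structure of G
  have hGA2 : G * A2 ^ 2 = A4 := by
    calc G * A2 ^ 2 = A4 * (A2 ^ 2 * A22inv) := by rw [hG]; ring
      _ = A4 := by rw [hA22mul, mul_one]
  have hΦA2 : Φ4 * A2 = A1 ^ 2 := by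
    calc Φ4 * A2 = A1 ^ 2 * (A2 * A2inv) := by rw [hΦ4]; ring
      _ = A1 ^ 2 := by rw [hA2mul, mul_one]
  -- oddness of G
  have hOddA4 : OddZero A4 := by
    rw [hA4]; unfold Ftr
    exact OddZero.prod fun i _ => oddZero_one_sub_X_pow ⟨2 * i, by ring⟩
  have hOddA2 : OddZero A2 := by
    rw [hA2]; unfold Ftr
    exact OddZero.prod fun i _ => oddZero_one_sub_X_pow ⟨i, by ring⟩
  have hOddA22 : OddZero (A2 ^ 2) := by rw [sq]; exact hOddA2.mul hOddA2
  have hOddG : OddZero G := hOddA4.mul (hOddA22.of_mul_eq_one hA22mul)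
  -- G ≡ 1, Φ4 ≡ 1 mod 2
  have hmapΦ : PowerSeries.map (ZMod.castHom (show (2:ℕ) ∣ 4 by norm_num) (ZMod 2)) Φ4 = 1 := by
    apply cancel_constOne (u := Ftr (ZMod 2) 2 N) (constantCoeff_Ftr 2 N (by norm_num))
    have h := congrArg
      (PowerSeries.map (ZMod.castHom (show (2:ℕ) ∣ 4 by norm_num) (ZMod 2))) hΦA2
    rw [map_mul, map_pow, hA2, hA1, map_Ftr, map_Ftr, Ftr_one_sq] at h
    rw [h, one_mul]
  have hmapG : PowerSeries.map (ZMod.castHom (show (2:ℕ) ∣ 4 by norm_num) (ZMod 2)) G = 1 := by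
    apply cancel_constOne (u := Ftr (ZMod 2) 4 N) (constantCoeff_Ftr 4 N (by norm_num))
    have h := congrArg
      (PowerSeries.map (ZMod.castHom (show (2:ℕ) ∣ 4 by norm_num) (ZMod 2))) hGA2
    rw [map_mul, map_pow, hA2, hA4, map_Ftr, map_Ftr, Ftr_two_sq] at h
    rw [h, one_mul]
  have hkey2 : ∀ x : ZMod 4,
      (ZMod.castHom (show (2:ℕ) ∣ 4 by norm_num) (ZMod 2)) x = 0 → ∃ y, x = 2 * y := by decide
  have hevenΦ : ∀ j : ℕ, j ≠ 0 → ∃ y, PowerSeries.coeff (R := (ZMod 4)) j Φ4 = 2 * y := by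
    intro j hj
    refine hkey2 _ ?_
    have h0 : PowerSeries.coeff (R := (ZMod 2)) j
        (PowerSeries.map (ZMod.castHom (show (2:ℕ) ∣ 4 by norm_num) (ZMod 2)) Φ4) = 0 := by
      rw [hmapΦ, PowerSeries.coeff_one, if_neg hj]
    rwa [PowerSeries.coeff_map] at h0
  have hevenG : ∀ j : ℕ, j ≠ 0 → ∃ y, PowerSeries.coeff (R := (ZMod 4)) j G = 2 * y := by
    intro j hj
    refine hkey2 _ ?_
    have h0 : PowerSeries.coeff (R := (ZMod 2)) j
        (PowerSeries.map (ZMod.castHom (show (2:ℕ) ∣ 4 by norm_num) (ZMod 2)) G) = 0 := by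
      rw [hmapG, PowerSeries.coeff_one, if_neg hj]
    rwa [PowerSeries.coeff_map] at h0
  have hG0 : PowerSeries.coeff (R := (ZMod 4)) 0 G = 1 := by
    have h := congrArg (constantCoeff (R := (ZMod 4))) hGA2
    rw [map_mul, map_pow, hcA2, hcA4, one_pow, mul_one] at h
    simpa [PowerSeries.coeff_zero_eq_constantCoeff] using h
  -- coefficient extraction at N
  have hext : PowerSeries.coeff (R := (ZMod 4)) N (G * Φ4) = PowerSeries.coeff (R := (ZMod 4)) N Φ4 := by
    rw [PowerSeries.coeff_mul, Finset.sum_eq_single (0, N)]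
    · rw [hG0, one_mul]
    · intro p hp hne
      rw [Finset.HasAntidiagonal.mem_antidiagonal] at hp
      rcases Nat.even_or_odd p.1 with h1 | h1
      · have hp1 : p.1 ≠ 0 := fun h0 => hne (Prod.ext_iff.mpr ⟨h0, by omega⟩)
        have h2 : Odd p.2 := by
          rw [Nat.odd_iff] at hNodd ⊢; rw [Nat.even_iff] at h1; omega
        have hp2 : p.2 ≠ 0 := by rintro h0; rw [h0] at h2; simp at h2
        obtain ⟨y, hy⟩ := hevenG p.1 hp1
        obtain ⟨z, hz⟩ := hevenΦ p.2 hp2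
        rw [hy, hz, show (2 : ZMod 4) * y * (2 * z) = 4 * (y * z) from by ring,
          show (4 : ZMod 4) = 0 from by decide, zero_mul]
      · rw [hOddG _ h1, zero_mul]
    · intro h
      exact absurd (Finset.HasAntidiagonal.mem_antidiagonal.mpr (by simp)) h
  rw [hext]
  -- relate Φ4 to the integral Φ
  set ΦZ : ℤ⟦X⟧ := Ftr ℤ 1 N ^ 2 * PowerSeries.invOfUnit (Ftr ℤ 2 N) 1 with hΦZ
  have hΦZmap : PowerSeries.map (Int.castRingHom (ZMod 4)) ΦZ = Φ4 := by
    apply cancel_constOne (u := A2) hcA2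
    have hinv : Ftr ℤ 2 N * PowerSeries.invOfUnit (Ftr ℤ 2 N) 1 = 1 :=
      PowerSeries.mul_invOfUnit _ 1 (by simpa using constantCoeff_Ftr (R := ℤ) 2 N (by norm_num))
    have hZ : ΦZ * Ftr ℤ 2 N = Ftr ℤ 1 N ^ 2 := by
      calc ΦZ * Ftr ℤ 2 N
          = Ftr ℤ 1 N ^ 2 * (Ftr ℤ 2 N * PowerSeries.invOfUnit (Ftr ℤ 2 N) 1) := by
            rw [hΦZ]; ring
        _ = Ftr ℤ 1 N ^ 2 := by rw [hinv, mul_one]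
    have h := congrArg (PowerSeries.map (Int.castRingHom (ZMod 4))) hZ
    rw [map_mul, map_pow, map_Ftr, map_Ftr] at h
    rw [← hA1, ← hA2] at h
    rw [h, hΦA2]
  rw [← hΦZmap, PowerSeries.coeff_map, Int.coe_castRingHom]
  exact (ZMod.intCast_zmod_eq_zero_iff_dvd _ 4).mpr (by exact_mod_cast keyPhi N hN4)
end

section
/- For all integers n ≥ 0 and k ≥ 0, b_{2k+1}(8n+5) ≡ 0 (mod 8), where b_m denotes the overcubic partition m-tuples function. -/
open PowerSeries

open Finset

section DvdCong
variable {A : Type*} [CommRing A]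

lemma dvdc_mul {d a b a' b' : A} (h : d ∣ a - b) (h' : d ∣ a' - b') :
    d ∣ a * a' - b * b' := by
  have : a * a' - b * b' = (a - b) * a' + b * (a' - b') := by ring
  rw [this]
  exact dvd_add (h.mul_right _) (h'.mul_left _)

lemma dvdc_pow {d a b : A} (h : d ∣ a - b) (k : ℕ) : d ∣ a ^ k - b ^ k :=
  h.trans (sub_dvd_pow_sub_pow a b k)

end DvdCong

section QSeries
variable {A : Type*} [CommRing A]

/-- coefficients in the `q`-binomial expansion of `∏ (y - q^{2i})`. -/
noncomputable def dd (q : A) : ℕ → ℕ → A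
  | 0, 0 => 1
  | 0, _ + 1 => 0
  | m + 1, 0 => dd q m 0
  | m + 1, k + 1 => dd q m (k + 1) + q ^ (2 * m) * dd q m k

lemma dd_zero_right (q : A) (m : ℕ) : dd q m 0 = 1 := by
  induction m with
  | zero => rfl
  | succ m ih => rw [dd, ih]

lemma dd_eq_zero (q : A) : ∀ {m k : ℕ}, m < k → dd q m k = 0
  | 0, _ + 1, _ => rfl
  | m + 1, k + 1, h => by
    rw [dd, dd_eq_zero q (by omega), dd_eq_zero q (by omega), mul_zero, add_zero]

/-- `E_j = ∏_{i=1}^{j} (1 - q^{2i})` -/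
noncomputable def EE (q : A) (j : ℕ) : A := ∏ i ∈ Finset.Icc 1 j, (1 - q ^ (2 * i))

lemma EE_zero (q : A) : EE q 0 = 1 := by simp [EE]

lemma EE_succ (q : A) (j : ℕ) : EE q (j + 1) = EE q j * (1 - q ^ (2 * (j + 1))) := by
  rw [EE, EE, Finset.prod_Icc_succ_top (by omega)]

lemma prod_formula (q : A) : ∀ m k j : ℕ, k + j = m →
    dd q m k * (EE q k * EE q j) = q ^ (k * (k - 1)) * EE q m := by
  intro m
  induction m with
  | zero =>
    intro k j hk
    obtain ⟨rfl, rfl⟩ : k = 0 ∧ j = 0 := by omega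
    simp [dd, EE_zero]
  | succ m ih =>
    intro k j hk
    match k, j with
    | 0, j =>
      simp only [dd_zero_right, Nat.zero_mul, pow_zero, one_mul, EE_zero]
      rw [show j = m + 1 by omega]
    | k + 1, 0 =>
      have hk' : k = m := by omega
      have hexp : 2 * m + m * (m - 1) = (m + 1) * (m + 1 - 1) := by
        cases m with
        | zero => rfl
        | succ m' => simp [Nat.add_sub_cancel]; ring
      subst hk'
      rw [dd, dd_eq_zero q (by omega), zero_add, EE_zero, mul_one, EE_succ]
      calc q ^ (2 * k) * dd q k k * (EE q k * (1 - q ^ (2 * (k + 1))))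
          = q ^ (2 * k) * (1 - q ^ (2 * (k + 1))) * (dd q k k * (EE q k * EE q 0)) := by
            rw [EE_zero]; ring
        _ = q ^ (2 * k) * (1 - q ^ (2 * (k + 1))) * (q ^ (k * (k - 1)) * EE q k) := by
            rw [ih k 0 (by omega)]
        _ = q ^ (2 * k + k * (k - 1)) * EE q k * (1 - q ^ (2 * (k + 1))) := by
            rw [pow_add]; ring
        _ = q ^ ((k + 1) * (k + 1 - 1)) * (EE q k * (1 - q ^ (2 * (k + 1)))) := by
            rw [hexp]; ring
    | k + 1, j + 1 =>
      have ih1 := ih (k + 1) j (by omega)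
      have ih2 := ih k (j + 1) (by omega)
      have hm : m = k + j + 1 := by omega
      rw [dd, add_mul, EE_succ q j, EE_succ q k]
      have e1 : dd q m (k + 1) * ((EE q k * (1 - q ^ (2 * (k + 1)))) * (EE q j * (1 - q ^ (2 * (j + 1)))))
          = q ^ ((k + 1) * k) * EE q m * (1 - q ^ (2 * (j + 1))) := by
        have : EE q k * (1 - q ^ (2 * (k + 1))) = EE q (k + 1) := (EE_succ q k).symm
        rw [this,
          show dd q m (k + 1) * (EE q (k + 1) * (EE q j * (1 - q ^ (2 * (j + 1)))))
             = dd q m (k + 1) * (EE q (k + 1) * EE q j) * (1 - q ^ (2 * (j + 1))) by ring,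
          ih1, Nat.add_sub_cancel]
      have e2 : q ^ (2 * m) * dd q m k * ((EE q k * (1 - q ^ (2 * (k + 1)))) * (EE q j * (1 - q ^ (2 * (j + 1)))))
          = q ^ (2 * m) * (q ^ (k * (k - 1)) * EE q m) * (1 - q ^ (2 * (k + 1))) := by
        have : EE q j * (1 - q ^ (2 * (j + 1))) = EE q (j + 1) := (EE_succ q j).symm
        rw [this,
          show q ^ (2 * m) * dd q m k * ((EE q k * (1 - q ^ (2 * (k + 1)))) * EE q (j + 1))
             = q ^ (2 * m) * (dd q m k * (EE q k * EE q (j + 1))) * (1 - q ^ (2 * (k + 1))) by ring,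
          ih2]
      rw [e1, e2, EE_succ q m, Nat.add_sub_cancel]
      -- now a pure power-juggling identity
      have p1 : q ^ ((k + 1) * k) * q ^ (2 * (j + 1)) = q ^ (2 * m) * q ^ (k * (k - 1)) := by
        rw [← pow_add, ← pow_add]
        congr 1
        cases k with
        | zero => omega
        | succ k' => subst hm; simp [Nat.add_sub_cancel]; ring
      have p2 : q ^ (2 * m) * q ^ (k * (k - 1)) * q ^ (2 * (k + 1))
          = q ^ ((k + 1) * k) * q ^ (2 * (m + 1)) := by
        rw [← pow_add, ← pow_add, ← pow_add]
        congr 1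
        cases k with
        | zero => omega
        | succ k' => subst hm; simp [Nat.add_sub_cancel]; ring
      have p3 : q ^ (k * (k - 1)) * q ^ (2 * k) = q ^ ((k + 1) * k) := by
        rw [← pow_add]
        congr 1
        cases k with
        | zero => rfl
        | succ k' => simp [Nat.add_sub_cancel]; ring
      linear_combination (EE q m) * p2 - (EE q m) * p1 - 2 * q ^ 2 * q ^ (2 * m) * (EE q m) * p3

lemma poly_identity (q y : A) (m : ℕ) :
    ∏ i ∈ range m, (y - q ^ (2 * i)) =
      ∑ k ∈ range (m + 1), (-1) ^ k * dd q m k * y ^ (m - k) := by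
  induction m with
  | zero => simp [dd]
  | succ m ih =>
    rw [prod_range_succ, ih]
    have Sm := ∑ k ∈ range (m + 1), (-1 : A) ^ k * dd q m k * y ^ (m - k)
    rw [Finset.sum_range_succ'
      (fun k => (-1 : A) ^ k * dd q (m + 1) k * y ^ (m + 1 - k))]
    have hdd : ∀ k : ℕ, dd q (m + 1) (k + 1) = dd q m (k + 1) + q ^ (2 * m) * dd q m k :=
      fun k => rfl
    have split : ∑ k ∈ range (m + 1), (-1 : A) ^ (k + 1) * dd q (m + 1) (k + 1) * y ^ (m + 1 - (k + 1))
        = (∑ k ∈ range (m + 1), (-1 : A) ^ (k + 1) * dd q m (k + 1) * y ^ (m - k))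
          - q ^ (2 * m) * ∑ k ∈ range (m + 1), (-1 : A) ^ k * dd q m k * y ^ (m - k) := by
      rw [eq_sub_iff_add_eq, Finset.mul_sum, ← Finset.sum_add_distrib]
      refine Finset.sum_congr rfl fun k hk => ?_
      rw [hdd]
      have : m + 1 - (k + 1) = m - k := by omega
      rw [this]
      ring
    rw [split]
    have top : ∑ k ∈ range (m + 1), (-1 : A) ^ (k + 1) * dd q m (k + 1) * y ^ (m - k)
        = ∑ k ∈ range m, (-1 : A) ^ (k + 1) * dd q m (k + 1) * y ^ (m - k) := by
      rw [Finset.sum_range_succ, dd_eq_zero q (by omega)]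
      ring
    have ymul : y * ∑ k ∈ range (m + 1), (-1 : A) ^ k * dd q m k * y ^ (m - k)
        = (∑ k ∈ range m, (-1 : A) ^ (k + 1) * dd q m (k + 1) * y ^ (m - k))
          + (-1 : A) ^ (0 : ℕ) * dd q (m + 1) 0 * y ^ (m + 1 - 0) := by
      rw [Finset.mul_sum]
      rw [Finset.sum_range_succ' (fun k => y * ((-1 : A) ^ k * dd q m k * y ^ (m - k)))]
      congr 1
      · refine Finset.sum_congr rfl fun k hk => ?_
        simp only [Finset.mem_range] at hk
        have h1 : m - k = (m - (k + 1)) + 1 := by omega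
        rw [h1, pow_succ]
        ring
      · have : dd q (m + 1) 0 = dd q m 0 := rfl
        rw [this, dd_zero_right]
        simp [pow_succ]
        ring
    rw [top]
    linear_combination ymul

lemma pair_prod (q : A) (n : ℕ) :
    ∏ i ∈ range (2 * n), (q ^ (2 * n - 1) - q ^ (2 * i)) =
      (-1) ^ n * q ^ (3 * n ^ 2 - 2 * n) * (∏ i ∈ range n, (1 - q ^ (2 * i + 1))) ^ 2 := by
  have base := Finset.prod_range_add (fun i => q ^ (2 * n - 1) - q ^ (2 * i)) n n
  rw [show n + n = 2 * n by ring] at base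
  rw [base]
  rw [← Finset.prod_range_reflect (fun i => q ^ (2 * n - 1) - q ^ (2 * (n + i))) n]
  rw [← Finset.prod_mul_distrib]
  have key : ∀ i ∈ range n,
      (q ^ (2 * n - 1) - q ^ (2 * i)) * (q ^ (2 * n - 1) - q ^ (2 * (n + (n - 1 - i)))) =
        (-1) * q ^ (2 * i + 2 * n - 1) * (1 - q ^ (2 * (n - i) - 1)) ^ 2 := by
    intro i hi
    simp only [Finset.mem_range] at hi
    have f1 : q ^ (2 * i) * q ^ (2 * (n - i) - 1) = q ^ (2 * n - 1) := by
      rw [← pow_add]; congr 1; omega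
    have f2 : q ^ (2 * (n + (n - 1 - i))) = q ^ (2 * n - 1) * q ^ (2 * (n - i) - 1) := by
      rw [← pow_add]; congr 1; omega
    have f3 : q ^ (2 * i + 2 * n - 1) = q ^ (2 * i) * q ^ (2 * n - 1) := by
      rw [← pow_add]; congr 1; omega
    rw [f2, f3]
    linear_combination (q ^ (2 * n - 1) * q ^ (2 * (n - i) - 1) - q ^ (2 * n - 1)) * f1
  rw [Finset.prod_congr rfl key]
  rw [Finset.prod_mul_distrib, Finset.prod_mul_distrib]
  have e1 : ∏ _i ∈ range n, (-1 : A) = (-1) ^ n := by simp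
  have e2 : ∏ i ∈ range n, q ^ (2 * i + 2 * n - 1) = q ^ (3 * n ^ 2 - 2 * n) := by
    rw [Finset.prod_pow_eq_pow_sum]
    congr 1
    have hs : ∑ i ∈ range n, (2 * i + 2 * n - 1) = (∑ i ∈ range n, i) * 2 + n * (2 * n - 1) := by
      have hterm : ∀ i ∈ range n, 2 * i + 2 * n - 1 = i * 2 + (2 * n - 1) := by
        intro i hi; simp only [Finset.mem_range] at hi; omega
      rw [Finset.sum_congr rfl hterm]
      rw [Finset.sum_add_distrib, Finset.sum_const, Finset.card_range, ← Finset.sum_mul,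
        smul_eq_mul]
    rw [hs, Finset.sum_range_id_mul_two]
    cases n with
    | zero => rfl
    | succ m =>
      have l : (m + 1) * (m + 1 - 1) + (m + 1) * (2 * (m + 1) - 1) = 3 * m ^ 2 + 4 * m + 1 := by
        simp only [Nat.add_sub_cancel, show 2 * (m + 1) - 1 = 2 * m + 1 by omega]
        ring
      have r : 3 * (m + 1) ^ 2 = 3 * m ^ 2 + 6 * m + 3 := by ring
      omega
  have refl3 : ∏ i ∈ range n, (1 - q ^ (2 * (n - i) - 1))
      = ∏ i ∈ range n, (1 - q ^ (2 * i + 1)) := by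
    rw [← Finset.prod_range_reflect (fun i => 1 - q ^ (2 * i + 1)) n]
    refine Finset.prod_congr rfl fun i hi => ?_
    simp only [Finset.mem_range] at hi
    have : 2 * (n - i) - 1 = 2 * (n - 1 - i) + 1 := by omega
    rw [this]
  have e3 : ∏ i ∈ range n, (1 - q ^ (2 * (n - i) - 1)) ^ 2
      = (∏ i ∈ range n, (1 - q ^ (2 * i + 1))) ^ 2 := by
    rw [Finset.prod_pow, refl3]
  rw [e1, e2, e3]


end QSeries

section MoreQ
variable {A : Type*} [CommRing A]

lemma ones_prod (q : A) (t : ℕ) (s : Finset ℕ) (e : ℕ → ℕ)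
    (h : ∀ i ∈ s, t ≤ e i) : q ^ t ∣ (∏ i ∈ s, (1 - q ^ (e i))) - 1 := by
  classical
  induction s using Finset.induction_on with
  | empty => simp
  | @insert a s' hx ih =>
    rw [Finset.prod_insert hx]
    have key : (1 - q ^ (e a)) * (∏ i ∈ s', (1 - q ^ e i)) - 1
        = ((∏ i ∈ s', (1 - q ^ e i)) - 1) - q ^ (e a) * ∏ i ∈ s', (1 - q ^ e i) := by
      ring
    rw [key]
    refine dvd_sub (ih fun i hi => h i (Finset.mem_insert_of_mem hi)) ?_
    exact Dvd.dvd.mul_right (pow_dvd_pow q (h a (Finset.mem_insert_self a s'))) _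

lemma EE_big_dvd (q : A) {c a : ℕ} (h : c ≤ a) : q ^ (2 * c + 2) ∣ EE q a - EE q c := by
  have hIcc : ∀ b : ℕ, Finset.Icc 1 b = Finset.Ioc 0 b := fun b => Finset.Icc_add_one_left_eq_Ioc 0 b
  have hsplit : EE q a = EE q c * ∏ i ∈ Finset.Ioc c a, (1 - q ^ (2 * i)) := by
    rw [EE, EE, hIcc, hIcc, Finset.prod_Ioc_consecutive _ (Nat.zero_le c) h]
  rw [hsplit, show EE q c * ∏ i ∈ Finset.Ioc c a, (1 - q ^ (2 * i)) - EE q c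
      = EE q c * ((∏ i ∈ Finset.Ioc c a, (1 - q ^ (2 * i))) - 1) by ring]
  refine Dvd.dvd.mul_left ?_ _
  refine ones_prod q _ _ _ fun i hi => ?_
  simp only [Finset.mem_Ioc] at hi
  omega

lemma prodsplit (f : ℕ → A) (n : ℕ) :
    ∏ i ∈ Finset.Icc 1 (2 * n + 1), f i
      = (∏ i ∈ range (n + 1), f (2 * i + 1)) * ∏ i ∈ Finset.Icc 1 n, f (2 * i) := by
  induction n with
  | zero => simp
  | succ n ih =>
    have e1 : 2 * (n + 1) + 1 = (2 * n + 2) + 1 := by ring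
    have e2 : 2 * n + 2 = (2 * n + 1) + 1 := by ring
    rw [e1, Finset.prod_Icc_succ_top (by omega), e2, Finset.prod_Icc_succ_top (by omega), ih,
      Finset.prod_range_succ, Finset.prod_range_succ, Finset.prod_Icc_succ_top (by omega : 1 ≤ n + 1)]
    rw [Finset.prod_range_succ, show 2 * (n + 1) + 1 = 2 * n + 1 + 1 + 1 by ring,
      show 2 * (n + 1) = 2 * n + 1 + 1 by ring]
    ring

/-- distance `|n - k|` in ℕ -/
def jdist (n k : ℕ) : ℕ := (n - k) + (k - n)

lemma sum_split (q : A) (n M : ℕ) :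
    ∑ k ∈ range (2 * n + 1), (-1 : A) ^ (n + k) * q ^ (M + jdist n k * jdist n k)
      = q ^ M * (1 + ∑ j ∈ range n, 2 * (-1) ^ (j + 1) * q ^ ((j + 1) ^ 2)) := by
  have h2n : 2 * n + 1 = n + (n + 1) := by ring
  rw [h2n, Finset.sum_range_add]
  rw [Finset.sum_range_succ' (fun i => (-1 : A) ^ (n + (n + i)) * q ^ (M + jdist n (n + i) * jdist n (n + i)))]
  have c0 : (-1 : A) ^ (n + (n + 0)) * q ^ (M + jdist n (n + 0) * jdist n (n + 0)) = q ^ M := by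
    have : jdist n (n + 0) = 0 := by unfold jdist; omega
    rw [this, show n + (n + 0) = 2 * n by ring, pow_mul]
    norm_num
  have cright : ∀ i ∈ range n, (-1 : A) ^ (n + (n + (i + 1))) * q ^ (M + jdist n (n + (i + 1)) * jdist n (n + (i + 1)))
      = (-1) ^ (i + 1) * (q ^ M * q ^ ((i + 1) ^ 2)) := by
    intro i hi
    have hj : jdist n (n + (i + 1)) = i + 1 := by unfold jdist; omega
    rw [hj, show n + (n + (i + 1)) = 2 * n + (i + 1) by ring, pow_add, pow_mul, pow_add]
    norm_num
    ring
  have cleft : ∀ k ∈ range n, (-1 : A) ^ (n + (n - 1 - k)) * q ^ (M + jdist n (n - 1 - k) * jdist n (n - 1 - k))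
      = (-1) ^ (k + 1) * (q ^ M * q ^ ((k + 1) ^ 2)) := by
    intro k hk
    simp only [Finset.mem_range] at hk
    have hj : jdist n (n - 1 - k) = k + 1 := by unfold jdist; omega
    rw [hj, show n + (n - 1 - k) = 2 * (n - 1 - k) + (k + 1) by omega, pow_add, pow_mul, pow_add]
    norm_num
    ring
  rw [← Finset.sum_range_reflect (fun k => (-1 : A) ^ (n + k) * q ^ (M + jdist n k * jdist n k)) n]
  rw [Finset.sum_congr rfl cleft, Finset.sum_congr rfl cright, c0]
  rw [mul_add, mul_one, Finset.mul_sum]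
  have : ∀ j ∈ range n, q ^ M * (2 * (-1 : A) ^ (j + 1) * q ^ ((j + 1) ^ 2))
      = (-1) ^ (j + 1) * (q ^ M * q ^ ((j + 1) ^ 2)) + (-1) ^ (j + 1) * (q ^ M * q ^ ((j + 1) ^ 2)) := by
    intro j hj; ring
  rw [Finset.sum_congr rfl this, Finset.sum_add_distrib]
  ring

end MoreQ

section ThetaCore

variable (q : PowerSeries ℤ) (hq : constantCoeff (R := ℤ) q = 0) (hqn : q ≠ 0)

include hq in
lemma EE_isUnit (j : ℕ) : IsUnit (EE q j) := by
  rw [PowerSeries.isUnit_iff_constantCoeff]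
  have : constantCoeff (R := ℤ) (EE q j) = 1 := by
    rw [EE, map_prod]
    refine Finset.prod_eq_one fun i hi => ?_
    simp only [Finset.mem_Icc] at hi
    rw [map_sub, map_one, map_pow, hq, zero_pow (by omega : 2 * i ≠ 0), sub_zero]
  rw [this]
  exact isUnit_one

lemma expo_eq (N k : ℕ) (hk : k ≤ 2 * (N + 1)) :
    (2 * (N + 1) - 1) * (2 * (N + 1) - k) + k * (k - 1)
      = (3 * (N + 1) ^ 2 - 2 * (N + 1)) + jdist (N + 1) k * jdist (N + 1) k := by
  have hM : 2 * (N + 1) ≤ 3 * (N + 1) ^ 2 := by nlinarith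
  rcases Nat.eq_zero_or_pos k with rfl | hk1
  · have hj : jdist (N + 1) 0 = N + 1 := by unfold jdist; omega
    rw [hj]
    zify [hk, hM, (by omega : 1 ≤ 2 * (N + 1))]
    ring
  rcases le_total k (N + 1) with hkn | hkn
  · have hj : jdist (N + 1) k = N + 1 - k := by unfold jdist; omega
    rw [hj]
    zify [hk, hM, hk1, hkn, (by omega : 1 ≤ 2 * (N + 1))]
    ring
  · have hj : jdist (N + 1) k = k - (N + 1) := by unfold jdist; omega
    rw [hj]
    zify [hk, hM, hk1, hkn, (by omega : 1 ≤ 2 * (N + 1))]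
    ring

include hq in
lemma term_cong (N k : ℕ) (hk : k ≤ 2 * (N + 1)) :
    q ^ ((3 * (N + 1) ^ 2 - 2 * (N + 1)) + (N + 1)) ∣
      dd q (2 * (N + 1)) k * EE q (N + 1) * q ^ ((2 * (N + 1) - 1) * (2 * (N + 1) - k))
        - q ^ ((3 * (N + 1) ^ 2 - 2 * (N + 1)) + jdist (N + 1) k * jdist (N + 1) k) := by
  set n := N + 1 with hn
  set M := 3 * n ^ 2 - 2 * n with hM
  set j := jdist n k with hj
  have hu : IsUnit (EE q k * EE q (2 * n - k)) := (EE_isUnit q hq k).mul (EE_isUnit q hq _)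
  rw [← IsUnit.dvd_mul_right hu]
  have hpf : dd q (2 * n) k * (EE q k * EE q (2 * n - k)) = q ^ (k * (k - 1)) * EE q (2 * n) :=
    prod_formula q (2 * n) k (2 * n - k) (by omega)
  have key : (dd q (2 * n) k * EE q n * q ^ ((2 * n - 1) * (2 * n - k))
        - q ^ (M + j * j)) * (EE q k * EE q (2 * n - k))
      = q ^ (M + j * j) * (EE q (2 * n) * EE q n - EE q k * EE q (2 * n - k)) := by
    rw [sub_mul, mul_sub]
    congr 1
    calc dd q (2 * n) k * EE q n * q ^ ((2 * n - 1) * (2 * n - k)) * (EE q k * EE q (2 * n - k))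
        = (dd q (2 * n) k * (EE q k * EE q (2 * n - k))) * q ^ ((2 * n - 1) * (2 * n - k)) * EE q n := by
          ring
      _ = q ^ (k * (k - 1)) * EE q (2 * n) * q ^ ((2 * n - 1) * (2 * n - k)) * EE q n := by rw [hpf]
      _ = q ^ ((2 * n - 1) * (2 * n - k) + k * (k - 1)) * (EE q (2 * n) * EE q n) := by
          rw [pow_add]; ring
      _ = q ^ (M + j * j) * (EE q (2 * n) * EE q n) := by rw [hn, hj, expo_eq N k hk]
  rw [key]
  rcases le_or_gt (N + 1) (j * j) with hbig | hsmall
  · exact dvd_mul_of_dvd_left (pow_dvd_pow q (by omega)) _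
  · set c := n - j with hc
    have hjn : j ≤ n := by rw [hj]; unfold jdist; omega
    have hck : c ≤ k := by rw [hc, hj]; unfold jdist; omega
    have hck2 : c ≤ 2 * n - k := by rw [hc, hj]; unfold jdist; omega
    have d1 : q ^ (2 * c + 2) ∣ EE q (2 * n) * EE q n - EE q k * EE q (2 * n - k) := by
      have h1 : q ^ (2 * c + 2) ∣ EE q (2 * n) * EE q n - EE q c * EE q c :=
        dvdc_mul (EE_big_dvd q (by omega)) (EE_big_dvd q (by omega))
      have h2 : q ^ (2 * c + 2) ∣ EE q k * EE q (2 * n - k) - EE q c * EE q c :=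
        dvdc_mul (EE_big_dvd q hck) (EE_big_dvd q hck2)
      have := dvd_sub h1 h2
      simpa using this
    obtain ⟨w, hw⟩ := d1
    rw [hw, ← mul_assoc, ← pow_add]
    have hjj : j ≤ j * j := by nlinarith
    exact Dvd.dvd.mul_right (pow_dvd_pow q (by omega)) w

end ThetaCore

section ThetaMain

variable (q : PowerSeries ℤ) (hq : constantCoeff (R := ℤ) q = 0) (hqn : q ≠ 0)

include hq hqn in
theorem theta (N : ℕ) :
    q ^ (N + 1) ∣ (∏ i ∈ Finset.Icc 1 N, (1 - q ^ i)) ^ 2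
      - (∏ i ∈ Finset.Icc 1 N, (1 - q ^ (2 * i)))
        * (1 + ∑ j ∈ range N, 2 * (-1) ^ (j + 1) * q ^ ((j + 1) ^ 2)) := by
  set n := N + 1 with hn
  set M := 3 * n ^ 2 - 2 * n with hM
  set O := ∏ i ∈ range n, (1 - q ^ (2 * i + 1)) with hO
  set Pθ := 1 + ∑ j ∈ range N, 2 * (-1 : PowerSeries ℤ) ^ (j + 1) * q ^ ((j + 1) ^ 2) with hP
  set fT1 := ∏ i ∈ Finset.Icc 1 N, (1 - q ^ i) with hfT1
  -- Step 1: rewrite q^M * (O^2 * EE q n) as a signed sum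
  have s1 : ((-1 : PowerSeries ℤ) ^ n * (-1 : PowerSeries ℤ) ^ n) = 1 := by
    rw [← pow_add]
    exact Even.neg_one_pow ⟨n, by ring⟩
  have step1 : q ^ M * (O ^ 2 * EE q n)
      = ∑ k ∈ range (2 * n + 1),
          (-1) ^ (n + k) * (dd q (2 * n) k * EE q n * q ^ ((2 * n - 1) * (2 * n - k))) := by
    have pp := pair_prod q n
    have pi := poly_identity q (q ^ (2 * n - 1)) (2 * n)
    calc q ^ M * (O ^ 2 * EE q n)
        = ((-1) ^ n * ((-1) ^ n * q ^ M * O ^ 2)) * EE q n := by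
          rw [show ((-1 : PowerSeries ℤ) ^ n * ((-1) ^ n * q ^ M * O ^ 2))
              = ((-1) ^ n * (-1) ^ n) * (q ^ M * O ^ 2) by ring, s1]
          ring
      _ = ((-1) ^ n * ∏ i ∈ range (2 * n), (q ^ (2 * n - 1) - q ^ (2 * i))) * EE q n := by
          rw [pp]
      _ = ((-1) ^ n * ∑ k ∈ range (2 * n + 1),
            (-1) ^ k * dd q (2 * n) k * (q ^ (2 * n - 1)) ^ (2 * n - k)) * EE q n := by
          rw [pi]
      _ = ∑ k ∈ range (2 * n + 1),
            (-1) ^ (n + k) * (dd q (2 * n) k * EE q n * q ^ ((2 * n - 1) * (2 * n - k))) := by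
          rw [Finset.mul_sum, Finset.sum_mul]
          refine Finset.sum_congr rfl fun k hk => ?_
          rw [← pow_mul, pow_add]
          ring
  -- Step 2: the signed sum is congruent to q^M * Pbig
  have step2 : q ^ (M + n) ∣
      (∑ k ∈ range (2 * n + 1),
        (-1 : PowerSeries ℤ) ^ (n + k) * (dd q (2 * n) k * EE q n * q ^ ((2 * n - 1) * (2 * n - k))))
      - ∑ k ∈ range (2 * n + 1), (-1) ^ (n + k) * q ^ (M + jdist n k * jdist n k) := by
    rw [← Finset.sum_sub_distrib]
    refine Finset.dvd_sum fun k hk => ?_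
    simp only [Finset.mem_range] at hk
    rw [← mul_sub]
    exact Dvd.dvd.mul_left (term_cong q hq N k (by omega)) _
  have step2' : ∑ k ∈ range (2 * n + 1), (-1 : PowerSeries ℤ) ^ (n + k) * q ^ (M + jdist n k * jdist n k)
      = q ^ M * (1 + ∑ j ∈ range n, 2 * (-1) ^ (j + 1) * q ^ ((j + 1) ^ 2)) := sum_split q n M
  -- Step 3: dropping the top term of Pbig
  have step3 : q ^ (M + n) ∣
      q ^ M * (1 + ∑ j ∈ range n, 2 * (-1 : PowerSeries ℤ) ^ (j + 1) * q ^ ((j + 1) ^ 2))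
        - q ^ M * Pθ := by
    rw [hn, Finset.sum_range_succ, hP]
    rw [show q ^ M * (1 + (∑ j ∈ range N, 2 * (-1 : PowerSeries ℤ) ^ (j + 1) * q ^ ((j + 1) ^ 2)
        + 2 * (-1) ^ (N + 1) * q ^ ((N + 1) ^ 2)))
      - q ^ M * (1 + ∑ j ∈ range N, 2 * (-1) ^ (j + 1) * q ^ ((j + 1) ^ 2))
      = (q ^ M * q ^ ((N + 1) ^ 2)) * (2 * (-1) ^ (N + 1)) by ring, ← pow_add]
    refine Dvd.dvd.mul_right (pow_dvd_pow q (by nlinarith)) _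
  -- Combine and cancel q^M
  have step4 : q ^ n ∣ O ^ 2 * EE q n - Pθ := by
    have comb : q ^ (M + n) ∣ q ^ M * (O ^ 2 * EE q n) - q ^ M * Pθ := by
      rw [step1]
      have heq : (∑ k ∈ range (2 * n + 1),
            (-1 : PowerSeries ℤ) ^ (n + k) * (dd q (2 * n) k * EE q n * q ^ ((2 * n - 1) * (2 * n - k))))
          - q ^ M * Pθ
          = ((∑ k ∈ range (2 * n + 1),
              (-1) ^ (n + k) * (dd q (2 * n) k * EE q n * q ^ ((2 * n - 1) * (2 * n - k))))
            - ∑ k ∈ range (2 * n + 1), (-1) ^ (n + k) * q ^ (M + jdist n k * jdist n k))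
            + ((q ^ M * (1 + ∑ j ∈ range n, 2 * (-1) ^ (j + 1) * q ^ ((j + 1) ^ 2)))
              - q ^ M * Pθ) := by
        rw [step2']
        ring
      rw [heq]
      exact dvd_add step2 step3
    rw [← mul_sub, pow_add] at comb
    exact (mul_dvd_mul_iff_left (pow_ne_zero M hqn)).mp comb
  -- Step 5: fT1 ≡ O * EE q N
  have hIcc : ∀ b : ℕ, Finset.Icc 1 b = Finset.Ioc 0 b := fun b => Finset.Icc_add_one_left_eq_Ioc 0 b
  have step5 : q ^ (N + 1) ∣ fT1 - O * EE q N := by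
    have hps := prodsplit (fun i => 1 - q ^ i) N
    have hsplit : ∏ i ∈ Finset.Icc 1 (2 * N + 1), (1 - q ^ i)
        = fT1 * ∏ i ∈ Finset.Ioc N (2 * N + 1), (1 - q ^ i) := by
      rw [hfT1, hIcc, hIcc, Finset.prod_Ioc_consecutive _ (Nat.zero_le N) (by omega)]
    have hOE : O * EE q N = fT1 * ∏ i ∈ Finset.Ioc N (2 * N + 1), (1 - q ^ i) := by
      rw [← hsplit, hps, hO, EE, hn]
    rw [hOE, show fT1 - fT1 * ∏ i ∈ Finset.Ioc N (2 * N + 1), (1 - q ^ i)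
        = -(fT1 * ((∏ i ∈ Finset.Ioc N (2 * N + 1), (1 - q ^ i)) - 1)) by ring]
    refine Dvd.dvd.neg_right (Dvd.dvd.mul_left ?_ _)
    refine ones_prod q _ _ (fun i => i) fun i hi => ?_
    simp only [Finset.mem_Ioc] at hi
    exact hi.1
  have step6 : q ^ (N + 1) ∣ EE q N - EE q n := by
    rw [dvd_sub_comm]
    exact (pow_dvd_pow q (by omega : N + 1 ≤ 2 * N + 2)).trans (EE_big_dvd q (by omega : N ≤ n))
  -- Final combination
  have c1 : q ^ (N + 1) ∣ fT1 ^ 2 - (O * EE q N) ^ 2 := dvdc_pow step5 2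
  have c2 : q ^ (N + 1) ∣ (O * EE q N) ^ 2 - O ^ 2 * EE q n * EE q N := by
    rw [show (O * EE q N) ^ 2 - O ^ 2 * EE q n * EE q N
        = (O ^ 2 * EE q N) * (EE q N - EE q n) by ring]
    exact Dvd.dvd.mul_left step6 _
  have c3 : q ^ (N + 1) ∣ O ^ 2 * EE q n * EE q N - Pθ * EE q N := by
    rw [← sub_mul]
    exact Dvd.dvd.mul_right (by rw [hn] at step4 ⊢; exact step4) _
  have total := dvd_add (dvd_add c1 c2) c3
  have hEN : (∏ i ∈ Finset.Icc 1 N, (1 - q ^ (2 * i))) = EE q N := rfl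
  rw [hEN]
  rw [show fT1 ^ 2 - EE q N * Pθ
      = (fT1 ^ 2 - (O * EE q N) ^ 2) + ((O * EE q N) ^ 2 - O ^ 2 * EE q n * EE q N)
        + (O ^ 2 * EE q n * EE q N - Pθ * EE q N) by ring]
  exact total

end ThetaMain

section Specialize

lemma thetaZ1 (N : ℕ) : (X : PowerSeries ℤ) ^ (N + 1) ∣
    (fTrunc 1 N) ^ 2 - fTrunc 2 N *
      (1 + ∑ j ∈ range N, 2 * (-1) ^ (j + 1) * X ^ ((j + 1) ^ 2)) := by
  have h := theta X PowerSeries.constantCoeff_X PowerSeries.X_ne_zero N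
  have e1 : fTrunc 1 N = ∏ i ∈ Finset.Icc 1 N, (1 - (X : PowerSeries ℤ) ^ i) := by
    refine Finset.prod_congr rfl fun i _ => ?_
    rw [one_mul]
  rw [e1]
  exact h

lemma thetaZ2 (N : ℕ) : (X : PowerSeries ℤ) ^ (N + 1) ∣
    (fTrunc 2 N) ^ 2 - fTrunc 4 N *
      (1 + ∑ j ∈ range N, 2 * (-1) ^ (j + 1) * X ^ (2 * (j + 1) ^ 2)) := by
  have hc : constantCoeff (R := ℤ) ((X : PowerSeries ℤ) ^ 2) = 0 := by
    rw [map_pow, PowerSeries.constantCoeff_X]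
    norm_num
  have h := theta ((X : PowerSeries ℤ) ^ 2) hc (pow_ne_zero 2 PowerSeries.X_ne_zero) N
  have e1 : (∏ i ∈ Finset.Icc 1 N, (1 - ((X : PowerSeries ℤ) ^ 2) ^ i)) = fTrunc 2 N := by
    refine Finset.prod_congr rfl fun i _ => ?_
    rw [← pow_mul]
  have e2 : (∏ i ∈ Finset.Icc 1 N, (1 - ((X : PowerSeries ℤ) ^ 2) ^ (2 * i))) = fTrunc 4 N := by
    refine Finset.prod_congr rfl fun i _ => ?_
    rw [← pow_mul, show 2 * (2 * i) = 4 * i by ring]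
  have e3 : ∀ j : ℕ, ((X : PowerSeries ℤ) ^ 2) ^ ((j + 1) ^ 2) = X ^ (2 * (j + 1) ^ 2) := by
    intro j
    rw [← pow_mul]
  rw [e1, e2] at h
  simp only [e3] at h
  exact (pow_dvd_pow X (by omega : N + 1 ≤ 2 * (N + 1))).trans
    (by rw [← pow_mul] at h; exact h)

end Specialize

section Endgame

abbrev S8 := PowerSeries (ZMod 8)

noncomputable def φ8 : PowerSeries ℤ →+* S8 := PowerSeries.map (Int.castRingHom (ZMod 8))

noncomputable def gg (N : ℕ) : S8 :=
  ∑ j ∈ range N, PowerSeries.C (R := ZMod 8) ((-1) ^ (j + 1)) * X ^ ((j + 1) ^ 2)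

noncomputable def hh (N : ℕ) : S8 :=
  ∑ j ∈ range N, PowerSeries.C (R := ZMod 8) ((-1) ^ (j + 1)) * X ^ (2 * (j + 1) ^ 2)

lemma map_thetasum (N : ℕ) (e : ℕ → ℕ) :
    φ8 (1 + ∑ j ∈ range N, 2 * (-1) ^ (j + 1) * X ^ (e j))
      = 1 + 2 * ∑ j ∈ range N, PowerSeries.C (R := ZMod 8) ((-1) ^ (j + 1)) * X ^ (e j) := by
  rw [map_add, map_one, map_sum, Finset.mul_sum]
  congr 1
  refine Finset.sum_congr rfl fun j _ => ?_
  rw [map_mul, map_mul, map_pow, map_neg, map_one, map_pow,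
    show φ8 X = X from PowerSeries.map_X _, show φ8 2 = 2 from map_ofNat _ 2]
  rw [show ((-1 : S8)) ^ (j + 1) = PowerSeries.C (R := ZMod 8) ((-1) ^ (j + 1)) by
    rw [map_pow, map_neg, map_one]]
  ring

lemma eight_S8 : (8 : S8) = 0 := by
  have h := map_natCast (PowerSeries.C (R := ZMod 8)) 8
  rw [show ((8 : ℕ) : ZMod 8) = 0 by decide, map_zero] at h
  rw [show (8 : S8) = ((8 : ℕ) : S8) by norm_cast]
  exact h.symm

end Endgame

section Coeffs

lemma sq_mod8 (a : ℕ) : a ^ 2 % 8 = 0 ∨ a ^ 2 % 8 = 1 ∨ a ^ 2 % 8 = 4 := by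
  have h1 : a ^ 2 % 8 = (a % 8) ^ 2 % 8 := Nat.pow_mod a 2 8
  have h3 : a % 8 = 0 ∨ a % 8 = 1 ∨ a % 8 = 2 ∨ a % 8 = 3 ∨ a % 8 = 4 ∨ a % 8 = 5 ∨
      a % 8 = 6 ∨ a % 8 = 7 := by omega
  rcases h3 with h | h | h | h | h | h | h | h <;> rw [h] at h1 <;> norm_num at h1 <;> omega

lemma twosq_mod8 (c : ℕ) : 2 * c ^ 2 % 8 = 0 ∨ 2 * c ^ 2 % 8 = 2 := by
  have h1 : c ^ 2 % 4 = (c % 4) ^ 2 % 4 := Nat.pow_mod c 2 4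
  have h3 : c % 4 = 0 ∨ c % 4 = 1 ∨ c % 4 = 2 ∨ c % 4 = 3 := by omega
  rcases h3 with h | h | h | h <;> rw [h] at h1 <;> norm_num at h1 <;> omega

lemma sq_ne (a n : ℕ) : a ^ 2 ≠ 8 * n + 5 := by
  have := sq_mod8 a
  omega

lemma sq2_ne (a c n : ℕ) : a ^ 2 + 2 * c ^ 2 ≠ 8 * n + 5 := by
  have := sq_mod8 a
  have := twosq_mod8 c
  omega

lemma coeff_sparse (c : ℕ → ZMod 8) (e : ℕ → ℕ) (N a : ℕ) (h : ∀ j < N, a ≠ e j) :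
    PowerSeries.coeff (R := ZMod 8) a
      (∑ j ∈ range N, PowerSeries.C (R := ZMod 8) (c j) * X ^ (e j)) = 0 := by
  rw [map_sum]
  refine Finset.sum_eq_zero fun j hj => ?_
  rw [PowerSeries.coeff_C_mul, PowerSeries.coeff_X_pow,
    if_neg (h j (Finset.mem_range.mp hj)), mul_zero]

lemma coeff_sparse_mul (c d : ℕ → ZMod 8) (e f : ℕ → ℕ) (N1 N2 a : ℕ)
    (h : ∀ j l, j < N1 → l < N2 → e j + f l ≠ a) :
    PowerSeries.coeff (R := ZMod 8) a
      ((∑ j ∈ range N1, PowerSeries.C (R := ZMod 8) (c j) * X ^ (e j))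
        * (∑ l ∈ range N2, PowerSeries.C (R := ZMod 8) (d l) * X ^ (f l))) = 0 := by
  rw [PowerSeries.coeff_mul]
  refine Finset.sum_eq_zero fun p hp => ?_
  rw [Finset.HasAntidiagonal.mem_antidiagonal] at hp
  rw [map_sum, map_sum, Finset.sum_mul_sum]
  refine Finset.sum_eq_zero fun j hj => Finset.sum_eq_zero fun l hl => ?_
  rw [PowerSeries.coeff_C_mul, PowerSeries.coeff_X_pow,
    PowerSeries.coeff_C_mul, PowerSeries.coeff_X_pow]
  rcases eq_or_ne p.1 (e j) with h1 | h1
  · rcases eq_or_ne p.2 (f l) with h2 | h2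
    · exact absurd (by rw [← h1, ← h2]; exact hp)
        (h j l (Finset.mem_range.mp hj) (Finset.mem_range.mp hl))
    · rw [if_neg h2, mul_zero, mul_zero]
  · rw [if_neg h1, mul_zero, zero_mul]

lemma four_mul_coeff_sq (ψ : S8) (a : ℕ) (ha : a % 2 = 1) :
    4 * PowerSeries.coeff (R := ZMod 8) a (ψ * ψ) = 0 := by
  rw [PowerSeries.coeff_mul, Finset.mul_sum]
  refine Finset.sum_involution (fun p _ => (p.2, p.1)) ?_ ?_ ?_ ?_
  · intro p hp
    have h8 : (8 : ZMod 8) = 0 := by decide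
    show 4 * (PowerSeries.coeff (R := ZMod 8) p.1 ψ * PowerSeries.coeff (R := ZMod 8) p.2 ψ)
      + 4 * (PowerSeries.coeff (R := ZMod 8) p.2 ψ * PowerSeries.coeff (R := ZMod 8) p.1 ψ) = 0
    calc 4 * (PowerSeries.coeff (R := ZMod 8) p.1 ψ * PowerSeries.coeff (R := ZMod 8) p.2 ψ)
        + 4 * (PowerSeries.coeff (R := ZMod 8) p.2 ψ * PowerSeries.coeff (R := ZMod 8) p.1 ψ)
        = 8 * (PowerSeries.coeff (R := ZMod 8) p.1 ψ * PowerSeries.coeff (R := ZMod 8) p.2 ψ) := by ring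
      _ = 0 := by rw [h8, zero_mul]
  · intro p hp hf
    intro hcontra
    have h1 : p.2 = p.1 := congrArg Prod.fst hcontra
    rw [Finset.HasAntidiagonal.mem_antidiagonal] at hp
    omega
  · intro p hp
    rw [Finset.HasAntidiagonal.mem_antidiagonal] at hp
    show (p.2, p.1) ∈ Finset.HasAntidiagonal.antidiagonal a
    rw [Finset.HasAntidiagonal.mem_antidiagonal]
    omega
  · intro p hp
    rfl

end Coeffs

lemma const_fTrunc (k N : ℕ) (hk : k ≠ 0) : constantCoeff (R := ℤ) (fTrunc k N) = 1 := by
  rw [fTrunc, map_prod]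
  refine Finset.prod_eq_one fun i hi => ?_
  simp only [Finset.mem_Icc] at hi
  rw [map_sub, map_one, map_pow, PowerSeries.constantCoeff_X,
    zero_pow (Nat.mul_ne_zero hk (by omega)), sub_zero]

theorem stmt17 (n k : ℕ) : b (2 * k + 1) (8 * n + 5) ≡ 0 [ZMOD 8] := by
  set m := 2 * k + 1 with hm
  set N := 8 * n + 5 with hNdef
  clear_value m N
  refine (ZMod.intCast_eq_intCast_iff _ _ _).mp ?_
  rw [Int.cast_zero]
  -- move to ZMod 8 power series
  set G := gg N with hG
  set H := hh N with hH
  set P1 : S8 := 1 + 2 * G with hP1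
  set P2 : S8 := 1 + 2 * H with hP2
  set A := φ8 (fTrunc 4 N) with hA
  set B1 := φ8 (fTrunc 1 N) with hB1
  set B2 := φ8 (fTrunc 2 N) with hB2
  set U := φ8 (PowerSeries.invOfUnit ((fTrunc 1 N) ^ (2 * m) * (fTrunc 2 N) ^ m) 1) with hU
  clear_value G H P1 P2 A B1 B2 U
  have hcast : ((b m N : ℤ) : ZMod 8) = PowerSeries.coeff (R := ZMod 8) N (A ^ m * U) := by
    rw [b, hA, hU, φ8, ← map_pow, ← map_mul, PowerSeries.coeff_map]
    rfl
  rw [hcast]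
  -- the inverse property
  have hDU : (B1 ^ (2 * m) * B2 ^ m) * U = 1 := by
    have hconst : constantCoeff (R := ℤ) ((fTrunc 1 N) ^ (2 * m) * (fTrunc 2 N) ^ m)
        = ((1 : ℤˣ) : ℤ) := by
      rw [map_mul, map_pow, map_pow, const_fTrunc 1 N one_ne_zero,
        const_fTrunc 2 N two_ne_zero, one_pow, one_pow, mul_one, Units.val_one]
    have h := PowerSeries.mul_invOfUnit ((fTrunc 1 N) ^ (2 * m) * (fTrunc 2 N) ^ m) 1 hconst
    have := congrArg φ8 h
    rw [map_mul, map_mul, map_pow, map_pow, map_one] at this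
    rw [hB1, hB2, hU]
    exact this
  -- mapped theta congruences
  have theta1' : (X : S8) ^ (N + 1) ∣ B1 ^ 2 - B2 * P1 := by
    have h := map_dvd φ8 (thetaZ1 N)
    rw [map_pow, map_sub, map_pow, map_mul, map_thetasum N (fun j => (j + 1) ^ 2)] at h
    rw [show φ8 X = X from PowerSeries.map_X _] at h
    rw [hB1, hB2, hP1, hG]
    exact h
  have theta2' : (X : S8) ^ (N + 1) ∣ B2 ^ 2 - A * P2 := by
    have h := map_dvd φ8 (thetaZ2 N)
    rw [map_pow, map_sub, map_pow, map_mul, map_thetasum N (fun j => 2 * (j + 1) ^ 2)] at h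
    rw [show φ8 X = X from PowerSeries.map_X _] at h
    rw [hB2, hA, hP2, hH]
    exact h
  -- the explicit inverse of P1 * P2 modulo 8
  set s : S8 := 2 * (-(G + H) + 2 * (G * G + H * H + G * H)) with hs
  clear_value s
  have hsQ : (1 + s) * (P1 * P2) = 1 := by
    have hE : (1 + s) * (P1 * P2)
        = 1 + 8 * (G * G * H + G * (H * H) + G * G * G + 2 * (G * G * G * H)
            + H * H * H + 2 * (G * (H * H * H)) + 2 * (G * G * (H * H))) := by
      rw [hs, hP1, hP2]
      ring
    rw [hE, eight_S8, zero_mul, add_zero]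
  have hs3 : s ^ 3 = 0 := by
    have : s ^ 3 = 8 * ((-(G + H) + 2 * (G * G + H * H + G * H)) ^ 3) := by
      rw [hs]; ring
    rw [this, eight_S8, zero_mul]
  set W : S8 := (1 + s) ^ m with hW
  clear_value W
  -- main congruence
  have hWD : (X : S8) ^ (N + 1) ∣ A ^ m - W * (B1 ^ (2 * m) * B2 ^ m) := by
    have d1 := dvdc_pow theta1' m
    have d2 := dvdc_pow theta2' m
    have hW1 : W * ((A * P2) ^ m * P1 ^ m) = A ^ m := by
      calc W * ((A * P2) ^ m * P1 ^ m) = A ^ m * ((1 + s) * (P1 * P2)) ^ m := by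
            rw [hW, mul_pow (1 + s) (P1 * P2) m, mul_pow P1 P2 m, mul_pow A P2 m]
            ring
        _ = A ^ m := by rw [hsQ, one_pow, mul_one]
    have key : A ^ m - W * (B1 ^ (2 * m) * B2 ^ m)
        = -((W * B2 ^ m) * ((B1 ^ 2) ^ m - (B2 * P1) ^ m))
          + -((W * P1 ^ m) * ((B2 ^ 2) ^ m - (A * P2) ^ m)) := by
      rw [← hW1, pow_mul B1 2 m]
      ring
    rw [key]
    exact dvd_add ((d1.mul_left _).neg_right) ((d2.mul_left _).neg_right)
  have hfin : (X : S8) ^ (N + 1) ∣ A ^ m * U - W := by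
    have hexp : A ^ m * U - W
        = (A ^ m - W * (B1 ^ (2 * m) * B2 ^ m)) * U + W * ((B1 ^ (2 * m) * B2 ^ m) * U - 1) := by
      ring
    rw [hexp, hDU, sub_self, mul_zero, add_zero]
    exact hWD.mul_right U
  -- coefficient computations
  have hNodd : N % 2 = 1 := by omega
  have hcg : PowerSeries.coeff (R := ZMod 8) N G = 0 := by
    rw [hG, gg]
    exact coeff_sparse _ _ _ _ fun j _ => by rw [hNdef]; exact fun hc => sq_ne (j + 1) n hc.symm
  have hch : PowerSeries.coeff (R := ZMod 8) N H = 0 := by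
    rw [hH, hh]
    exact coeff_sparse _ _ _ _ fun j _ => by omega
  have hcgh : PowerSeries.coeff (R := ZMod 8) N (G * H) = 0 := by
    rw [hG, hH, gg, hh]
    refine coeff_sparse_mul _ _ _ _ _ _ _ fun j l _ _ => ?_
    rw [hNdef]
    exact sq2_ne (j + 1) (l + 1) n
  have hchh : PowerSeries.coeff (R := ZMod 8) N (H * H) = 0 := by
    rw [hH, hh]
    refine coeff_sparse_mul _ _ _ _ _ _ _ fun j l _ _ => ?_
    omega
  have hc4gg : 4 * PowerSeries.coeff (R := ZMod 8) N (G * G) = 0 := four_mul_coeff_sq G N hNodd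
  have hcs : PowerSeries.coeff (R := ZMod 8) N s = 0 := by
    have hrew : s = PowerSeries.C (R := ZMod 8) (-2) * G + PowerSeries.C (R := ZMod 8) (-2) * H
        + PowerSeries.C (R := ZMod 8) 4 * (G * G) + PowerSeries.C (R := ZMod 8) 4 * (H * H)
        + PowerSeries.C (R := ZMod 8) 4 * (G * H) := by
      have c2 : PowerSeries.C (R := ZMod 8) (-2) = -2 := by rw [map_neg, map_ofNat]
      have c4 : PowerSeries.C (R := ZMod 8) (4 : ZMod 8) = 4 := map_ofNat _ 4
      rw [c2, c4, hs]
      ring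
    rw [hrew, map_add, map_add, map_add, map_add, PowerSeries.coeff_C_mul,
      PowerSeries.coeff_C_mul, PowerSeries.coeff_C_mul, PowerSeries.coeff_C_mul,
      PowerSeries.coeff_C_mul, hcg, hch, hcgh, hchh]
    rw [show ((4 : ZMod 8)) * PowerSeries.coeff (R := ZMod 8) N (G * G)
        = 4 * PowerSeries.coeff (R := ZMod 8) N (G * G) by norm_num, hc4gg]
    ring
  have hcs2 : PowerSeries.coeff (R := ZMod 8) N (s ^ 2) = 0 := by
    have hid : s ^ 2 = PowerSeries.C (R := ZMod 8) 4 * ((G + H) * (G + H))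
        + 8 * (2 * (G * G * (G * G)) + 4 * (G * G * (G * H)) + 6 * (G * G * (H * H))
          + 4 * (G * (H * (H * H))) + 2 * (H * H * (H * H))
          - 2 * (G * (G * G)) - 4 * (G * (G * H)) - 4 * (G * (H * H)) - 2 * (H * (H * H))) := by
      have c4 : PowerSeries.C (R := ZMod 8) (4 : ZMod 8) = 4 := map_ofNat _ 4
      rw [c4, hs]
      ring
    rw [hid, eight_S8, zero_mul, add_zero, PowerSeries.coeff_C_mul]
    rw [show ((4 : ZMod 8)) * PowerSeries.coeff (R := ZMod 8) N ((G + H) * (G + H))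
        = 4 * PowerSeries.coeff (R := ZMod 8) N ((G + H) * (G + H)) by norm_num]
    exact four_mul_coeff_sq (G + H) N hNodd
  have hcW : PowerSeries.coeff (R := ZMod 8) N W = 0 := by
    rw [hW, add_comm (1 : S8) s, add_pow, map_sum]
    refine Finset.sum_eq_zero fun j hj => ?_
    have hcastnat : ((Nat.choose m j : ℕ) : S8)
        = PowerSeries.C (R := ZMod 8) ((Nat.choose m j : ℕ) : ZMod 8) :=
      (map_natCast (PowerSeries.C (R := ZMod 8)) _).symm
    rw [one_pow, mul_one, hcastnat, PowerSeries.coeff_mul_C]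
    match j with
    | 0 =>
      rw [pow_zero, PowerSeries.coeff_one, if_neg (by omega : N ≠ 0), zero_mul]
    | 1 =>
      rw [pow_one, hcs, zero_mul]
    | 2 =>
      rw [hcs2, zero_mul]
    | (j + 3) =>
      rw [show s ^ (j + 3) = s ^ 3 * s ^ j by rw [← pow_add]; ring_nf, hs3, zero_mul,
        map_zero, zero_mul]
  -- finish
  have hco := (PowerSeries.X_pow_dvd_iff.mp hfin) N (Nat.lt_succ_self N)
  rw [map_sub, sub_eq_zero] at hco
  rw [hco, hcW]
end
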